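/- arXiv:1708.03971 — 5 statements merged into one kernel-verified Lean document; each statement's English description precedes it below -/
import Mathlib

section
/- Let F be a nonzero homogeneous real polynomial of degree m ≥ 1 in three variables. Then the set H(F) ⊆ ℝ³ of hyperbolicity directions of F is closed in ℝ³ and is invariant under multiplication by real scalars (it is a closed cone). (This is the cone version of the paper's claim that hyp(C) is a closed subset of ℝP².) -/
/-- The univariate real polynomial `t ↦ F(x + t·e)`. -/
noncomputable def linePoly (F : MvPolynomial (Fin 3) ℝ) (x e : Fin 3 → ℝ) : Polynomial ℝ :=
  MvPolynomial.aeval (fun i => Polynomial.C (x i) + Polynomial.C (e i) * Polynomial.X) F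

/-- `e` is a hyperbolicity direction of `F` if for every `x` the polynomial
`t ↦ F(x + t·e)` splits over `ℝ`. -/
def IsHypDir (F : MvPolynomial (Fin 3) ℝ) (e : Fin 3 → ℝ) : Prop :=
  ∀ x : Fin 3 → ℝ, (linePoly F x e).Splits

open Polynomial

section helpers

lemma linePoly_comp (F : MvPolynomial (Fin 3) ℝ) (x e : Fin 3 → ℝ) (h : ℝ[X]) :
    (linePoly F x e).comp h
      = MvPolynomial.aeval (fun i => Polynomial.C (x i) + Polynomial.C (e i) * h) F := by
  rw [comp_eq_aeval, linePoly]
  rw [show (Polynomial.aeval h) (MvPolynomial.aeval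
      (fun i => Polynomial.C (x i) + Polynomial.C (e i) * Polynomial.X) F)
    = ((Polynomial.aeval h).comp (MvPolynomial.aeval
      (fun i => Polynomial.C (x i) + Polynomial.C (e i) * Polynomial.X))) F from rfl,
    MvPolynomial.comp_aeval]
  have : (fun i => (Polynomial.aeval h) (C (x i) + C (e i) * X))
      = fun i => Polynomial.C (x i) + Polynomial.C (e i) * h := by
    funext i; simp
  rw [this]

lemma linePoly_smul (F : MvPolynomial (Fin 3) ℝ) (x e : Fin 3 → ℝ) (c : ℝ) :
    linePoly F x (c • e) = (linePoly F x e).comp (C c * X) := by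
  rw [linePoly_comp, linePoly]
  have : (fun i => C (x i) + C ((c • e) i) * X)
      = fun i => Polynomial.C (x i) + Polynomial.C (e i) * (C c * X) := by
    funext i
    simp only [Pi.smul_apply, smul_eq_mul, C_mul]
    ring
  rw [this]

lemma linePoly_shift (F : MvPolynomial (Fin 3) ℝ) (x e : Fin 3 → ℝ) (a : ℝ) :
    linePoly F (x + a • e) e = (linePoly F x e).comp (X + C a) := by
  rw [linePoly_comp, linePoly]
  have : (fun i => C ((x + a • e) i) + C (e i) * X)
      = fun i => Polynomial.C (x i) + Polynomial.C (e i) * (X + C a) := by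
    funext i
    simp only [Pi.add_apply, Pi.smul_apply, smul_eq_mul, C_add, ← C_mul, mul_add]
    ring
  rw [this]

lemma splits_of_roots_real : ∀ (n : ℕ) (f : ℝ[X]), f.natDegree ≤ n →
    (∀ z : ℂ, aeval z f = 0 → z.im = 0) → f.Splits := by
  intro n
  induction n with
  | zero => intro f hd _; exact Splits.of_natDegree_le_one (le_trans hd (by norm_num))
  | succ n ih =>
    intro f hd h
    by_cases hf0 : f = 0
    · simp [hf0]
    rcases le_or_gt f.natDegree 1 with h1 | h1
    · exact Splits.of_natDegree_le_one h1
    · have hdpos : 0 < (f.map (algebraMap ℝ ℂ)).degree := by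
        rw [degree_map, degree_eq_natDegree hf0]
        exact_mod_cast Nat.lt_of_lt_of_le Nat.zero_lt_one h1.le
      obtain ⟨z, hz⟩ := Complex.exists_root hdpos
      have hz' : aeval z f = 0 := by
        rwa [aeval_def, eval₂_eq_eval_map]
      have him := h z hz'
      set r := z.re with hr
      have hzr : z = (r : ℂ) := Complex.ext rfl (by simpa using him)
      have hroot : f.IsRoot r := by
        have : aeval ((r : ℂ)) f = 0 := by rwa [hzr] at hz'
        rw [show ((r:ℂ)) = algebraMap ℝ ℂ r from rfl, aeval_algebraMap_apply] at this
        simpa using (map_eq_zero_iff _ (algebraMap ℝ ℂ).injective).mp (by simpa using this)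
      have hdvd : (X - C r) ∣ f := dvd_iff_isRoot.mpr hroot
      obtain ⟨q, hq⟩ := hdvd
      have hq0 : q ≠ 0 := fun hq0 => hf0 (by simp [hq, hq0])
      have hdeg : f.natDegree = 1 + q.natDegree := by
        rw [hq, natDegree_mul (X_sub_C_ne_zero r) hq0, natDegree_X_sub_C]
      have hsq : q.Splits := by
        apply ih q (by omega)
        intro w hw
        apply h w
        rw [hq]
        simp [hw]
      rw [hq]
      exact (Splits.X_sub_C _).mul hsq

lemma im_eq_zero_of_splits {f : ℝ[X]} (hf : f ≠ 0) (hs : f.Splits)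
    {z : ℂ} (hz : aeval z f = 0) : z.im = 0 := by
  have hfac := hs.eq_prod_roots
  have : aeval z f = (f.leadingCoeff : ℂ) * ((f.roots.map fun a : ℝ => z - (a : ℂ)).prod) := by
    conv_lhs => rw [hfac]
    rw [map_mul, map_multiset_prod, Multiset.map_map]
    simp
  rw [this] at hz
  rcases mul_eq_zero.mp hz with h | h
  · exact absurd (by exact_mod_cast h) (leadingCoeff_ne_zero.mpr hf)
  · have h0 : (0:ℂ) ∈ f.roots.map fun a : ℝ => z - (a : ℂ) := Multiset.prod_eq_zero_iff.mp h
    obtain ⟨r, _, hr⟩ := Multiset.mem_map.mp h0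
    have : z = (r : ℂ) := by linear_combination hr
    simp [this]

lemma splits_comp_linear {f : ℝ[X]} (hs : f.Splits) (c : ℝ) :
    (f.comp (C c * X)).Splits := by
  by_cases hf : f = 0
  · simp [hf]
  by_cases hc : c = 0
  · subst hc
    rw [show (C (0:ℝ) * X) = 0 by simp, comp_zero]
    exact Splits.C _
  apply splits_of_roots_real _ (f.comp (C c * X)) le_rfl
  intro z hz
  rw [aeval_comp] at hz
  have : aeval ((c : ℂ) * z) f = 0 := by
    simpa using hz
  have him := im_eq_zero_of_splits hf hs this
  simp only [Complex.mul_im, Complex.ofReal_re, Complex.ofReal_im, zero_mul, add_zero] at him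
  rcases mul_eq_zero.mp him with h | h
  · exact absurd (by exact_mod_cast h) hc
  · exact h

lemma keyIneq : ∀ (d : ℕ) (g : ℝ[X]), g.Splits → g.natDegree ≤ d → ∀ b : ℝ,
    ∑ s ∈ Finset.range (d + 1), b ^ (2 * s) * g.coeff s ^ 2
      ≤ 2 ^ d * Complex.normSq (aeval (b * Complex.I) g) := by
  intro d
  induction d with
  | zero =>
    intro g hs hd b
    have hg : g = C (g.coeff 0) := eq_C_of_natDegree_le_zero hd
    rw [Finset.sum_range_one]
    conv_rhs => rw [hg]
    simp [Complex.normSq_ofReal, sq]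
  | succ d ih =>
    intro g hs hd b
    by_cases h0 : g.natDegree = 0
    · have hg : g = C (g.coeff 0) := eq_C_of_natDegree_le_zero (le_of_eq h0)
      have : ∀ s ∈ Finset.range (d + 2), s ≠ 0 → b ^ (2*s) * g.coeff s ^ 2 = 0 := by
        intro s _ hs0
        rw [hg, coeff_C, if_neg hs0]
        ring
      rw [Finset.sum_eq_single 0 this (by simp)]
      conv_rhs => rw [hg]
      simp only [pow_zero, mul_zero, aeval_C, Complex.coe_algebraMap, Complex.normSq_ofReal]
      have h2d : (1:ℝ) ≤ 2 ^ (d+1) := one_le_pow₀ one_le_two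
      nlinarith [sq_nonneg (g.coeff 0)]
    · have hg0 : g ≠ 0 := fun h => h0 (by simp [h])
      obtain ⟨r, hr⟩ := Splits.exists_eval_eq_zero hs (by
        rw [degree_eq_natDegree hg0]; exact_mod_cast h0)
      have hroot : g.IsRoot r := by simpa using hr
      obtain ⟨q, hq⟩ := dvd_iff_isRoot.mpr hroot
      have hqne : q ≠ 0 := fun h => hg0 (by simp [hq, h])
      have hdeg : g.natDegree = 1 + q.natDegree := by
        rw [hq, natDegree_mul (X_sub_C_ne_zero r) hqne, natDegree_X_sub_C]
      have hqsplit : q.Splits := by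
        exact (splits_mul_iff_right (X_sub_C_ne_zero r) (Splits.X_sub_C r)).mp (hq ▸ hs)
      have hqd : q.natDegree ≤ d := by omega
      have IH := ih q hqsplit hqd b
      have hcoeff0 : g.coeff 0 = -r * q.coeff 0 := by
        rw [hq]; simp [mul_coeff_zero]
      have hcoeffs : ∀ i, g.coeff (i + 1) = q.coeff i - r * q.coeff (i + 1) := by
        intro i
        rw [hq, sub_mul, coeff_sub, coeff_X_mul, coeff_C_mul]
      have hQd1 : q.coeff (d + 1) = 0 := coeff_eq_zero_of_natDegree_lt (by omega)
      have hLHS : ∑ s ∈ Finset.range (d + 2), b ^ (2 * s) * g.coeff s ^ 2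
          ≤ 2 * (b ^ 2 + r ^ 2) * ∑ s ∈ Finset.range (d + 1), b ^ (2 * s) * q.coeff s ^ 2 := by
        rw [Finset.sum_range_succ']
        have step1 : ∀ i ∈ Finset.range (d+1),
            b ^ (2 * (i+1)) * g.coeff (i+1) ^ 2
              ≤ b ^ (2*(i+1)) * (2 * q.coeff i ^ 2 + 2 * r ^ 2 * q.coeff (i+1) ^ 2) := by
          intro i _
          have hb : (0:ℝ) ≤ b ^ (2*(i+1)) := by
            rw [pow_mul]; positivity
          apply mul_le_mul_of_nonneg_left _ hb
          rw [hcoeffs i]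
          nlinarith [sq_nonneg (q.coeff i + r * q.coeff (i+1))]
        have h2 : ∑ i ∈ Finset.range (d+1), b ^ (2*(i+1)) * (2 * q.coeff i ^ 2 + 2 * r ^ 2 * q.coeff (i+1) ^ 2)
            = 2 * b ^ 2 * (∑ s ∈ Finset.range (d + 1), b ^ (2 * s) * q.coeff s ^ 2)
              + 2 * r ^ 2 * (∑ i ∈ Finset.range (d+1), b ^ (2*(i+1)) * q.coeff (i+1) ^ 2) := by
          rw [Finset.mul_sum, Finset.mul_sum, ← Finset.sum_add_distrib]
          apply Finset.sum_congr rfl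
          intro i _
          rw [show 2*(i+1) = 2*i + 2 by ring, pow_add]
          ring
        have h3 : ∑ i ∈ Finset.range (d+1), b ^ (2*(i+1)) * q.coeff (i+1) ^ 2
            = (∑ s ∈ Finset.range (d+2), b ^ (2*s) * q.coeff s ^ 2) - b ^ (2*0) * q.coeff 0 ^ 2 := by
          conv_rhs => rw [Finset.sum_range_succ']
          ring
        have h4 : ∑ s ∈ Finset.range (d+2), b ^ (2*s) * q.coeff s ^ 2
            = ∑ s ∈ Finset.range (d+1), b ^ (2*s) * q.coeff s ^ 2 := by
          rw [Finset.sum_range_succ, hQd1]; ring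
        calc (∑ i ∈ Finset.range (d+1), b ^ (2 * (i+1)) * g.coeff (i+1) ^ 2) + b ^ (2*0) * g.coeff 0 ^ 2
            ≤ (∑ i ∈ Finset.range (d+1), b ^ (2*(i+1)) * (2 * q.coeff i ^ 2 + 2 * r ^ 2 * q.coeff (i+1) ^ 2))
              + b ^ (2*0) * g.coeff 0 ^ 2 := add_le_add_left (Finset.sum_le_sum step1) _
          _ = 2 * b ^ 2 * (∑ s ∈ Finset.range (d + 1), b ^ (2 * s) * q.coeff s ^ 2)
              + 2 * r ^ 2 * ((∑ s ∈ Finset.range (d + 1), b ^ (2 * s) * q.coeff s ^ 2) - q.coeff 0 ^ 2)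
              + r ^ 2 * q.coeff 0 ^ 2 := by
              rw [h2, h3, h4, hcoeff0]; ring
          _ ≤ 2 * (b ^ 2 + r ^ 2) * ∑ s ∈ Finset.range (d + 1), b ^ (2 * s) * q.coeff s ^ 2 := by
              nlinarith [sq_nonneg (r * q.coeff 0)]
      have hRHS : Complex.normSq (aeval (b * Complex.I) g)
          = (r ^ 2 + b ^ 2) * Complex.normSq (aeval (b * Complex.I) q) := by
        rw [hq, map_mul, map_mul]
        congr 1
        rw [map_sub, aeval_X, aeval_C]
        have h5 : ((b:ℂ) * Complex.I - algebraMap ℝ ℂ r) = Complex.mk (-r) b := by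
          apply Complex.ext <;> simp
        rw [h5, Complex.normSq_mk]
        ring
      calc ∑ s ∈ Finset.range (d + 2), b ^ (2 * s) * g.coeff s ^ 2
          ≤ 2 * (b ^ 2 + r ^ 2) * ∑ s ∈ Finset.range (d + 1), b ^ (2 * s) * q.coeff s ^ 2 := hLHS
        _ ≤ 2 * (b ^ 2 + r ^ 2) * (2 ^ d * Complex.normSq (aeval (b * Complex.I) q)) := by
            apply mul_le_mul_of_nonneg_left IH
            positivity
        _ = 2 ^ (d+1) * Complex.normSq (aeval (b * Complex.I) g) := by
            rw [hRHS]; ring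


lemma linePoly_natDegree_le {F : MvPolynomial (Fin 3) ℝ} {m : ℕ} (hhom : F.IsHomogeneous m)
    (x e : Fin 3 → ℝ) : (linePoly F x e).natDegree ≤ m := by
  classical
  rw [linePoly, ← MvPolynomial.support_sum_monomial_coeff F, map_sum]
  apply Polynomial.natDegree_sum_le_of_forall_le
  intro d hd
  rw [MvPolynomial.aeval_monomial]
  apply le_trans (natDegree_mul_le)
  have h1 : (algebraMap ℝ ℝ[X]) (MvPolynomial.coeff d F) = C (MvPolynomial.coeff d F) := rfl
  rw [h1, natDegree_C, zero_add]
  have hdm : d.degree = m := by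
    by_contra hne
    exact (MvPolynomial.mem_support_iff.mp hd) (hhom.coeff_eq_zero hne)
  calc (d.prod fun i k => (C (x i) + C (e i) * X) ^ k).natDegree
      ≤ ∑ i ∈ d.support, ((C (x i) + C (e i) * X) ^ d i).natDegree := by
        rw [Finsupp.prod]
        exact natDegree_prod_le _ _
    _ ≤ ∑ i ∈ d.support, d i := by
        apply Finset.sum_le_sum
        intro i _
        apply le_trans (natDegree_pow_le)
        have : (C (x i) + C (e i) * X).natDegree ≤ 1 := by
          apply le_trans (natDegree_add_le _ _)
          simp only [natDegree_C, max_le_iff]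
          constructor
          · omega
          · exact le_trans (natDegree_C_mul_le _ _) (by simp)
        calc d i * (C (x i) + C (e i) * X).natDegree ≤ d i * 1 :=
              Nat.mul_le_mul_left _ this
          _ = d i := Nat.mul_one _
    _ = m := by rw [← hdm]; rfl


lemma linePoly_C (a : ℝ) (x e : Fin 3 → ℝ) : linePoly (MvPolynomial.C a) x e = C a := by
  simp [linePoly]

lemma linePoly_add (p q : MvPolynomial (Fin 3) ℝ) (x e : Fin 3 → ℝ) :
    linePoly (p + q) x e = linePoly p x e + linePoly q x e := by
  simp [linePoly]

lemma linePoly_mul_X (p : MvPolynomial (Fin 3) ℝ) (i : Fin 3) (x e : Fin 3 → ℝ) :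
    linePoly (p * MvPolynomial.X i) x e = linePoly p x e * (C (x i) + C (e i) * X) := by
  simp [linePoly]

lemma continuous_linePoly_coeff (F : MvPolynomial (Fin 3) ℝ) (x : Fin 3 → ℝ) (s : ℕ) :
    Continuous fun e : Fin 3 → ℝ => (linePoly F x e).coeff s := by
  induction F using MvPolynomial.induction_on generalizing s with
  | C a =>
    simp only [linePoly_C]
    exact continuous_const
  | add p q hp hq =>
    simp only [linePoly_add, coeff_add]
    exact (hp s).add (hq s)
  | mul_X p i hp =>
    simp only [linePoly_mul_X]
    cases s with
    | zero =>
      have : ∀ e : Fin 3 → ℝ, (linePoly p x e * (C (x i) + C (e i) * X)).coeff 0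
          = (linePoly p x e).coeff 0 * (x i) := by
        intro e
        rw [mul_coeff_zero]
        simp
      simp only [this]
      exact (hp 0).mul continuous_const
    | succ n =>
      have : ∀ e : Fin 3 → ℝ, (linePoly p x e * (C (x i) + C (e i) * X)).coeff (n+1)
          = (linePoly p x e).coeff (n+1) * (x i) + (linePoly p x e).coeff n * (e i) := by
        intro e
        rw [mul_add, coeff_add, coeff_mul_C]
        congr 1
        rw [show linePoly p x e * (C (e i) * X) = (linePoly p x e * C (e i)) * X by ring,
          coeff_mul_X, coeff_mul_C]
      simp only [this]
      exact ((hp (n+1)).mul continuous_const).add ((hp n).mul (continuous_apply i))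

lemma continuous_linePoly_aeval (F : MvPolynomial (Fin 3) ℝ) (x : Fin 3 → ℝ) (z : ℂ) :
    Continuous fun e : Fin 3 → ℝ => (aeval z (linePoly F x e) : ℂ) := by
  induction F using MvPolynomial.induction_on with
  | C a => simp only [linePoly_C, aeval_C]; exact continuous_const
  | add p q hp hq => simp only [linePoly_add, map_add]; exact hp.add hq
  | mul_X p i hp =>
    simp only [linePoly_mul_X, map_mul, map_add, aeval_C, aeval_X, map_mul]
    exact hp.mul (continuous_const.add ((Continuous.mul
      (Complex.continuous_ofReal.comp (continuous_apply i)) continuous_const)))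
end helpers

theorem stmt_1 (m : ℕ) (hm : 1 ≤ m) (F : MvPolynomial (Fin 3) ℝ) (hF : F ≠ 0)
    (hhom : F.IsHomogeneous m) :
    IsClosed {e : Fin 3 → ℝ | IsHypDir F e} ∧
      ∀ (c : ℝ) (e : Fin 3 → ℝ), IsHypDir F e → IsHypDir F (c • e) := by
  constructor
  · have hset : {e : Fin 3 → ℝ | IsHypDir F e} = ⋂ (x : Fin 3 → ℝ), ⋂ (b : ℝ),
        {e : Fin 3 → ℝ | ∑ s ∈ Finset.range (m + 1), b ^ (2 * s) * (linePoly F x e).coeff s ^ 2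
          ≤ 2 ^ m * Complex.normSq (aeval ((b : ℂ) * Complex.I) (linePoly F x e))} := by
      ext e
      simp only [Set.mem_setOf_eq, Set.mem_iInter]
      constructor
      · intro he x b
        exact keyIneq m (linePoly F x e) (he x) (linePoly_natDegree_le hhom x e) b
      · intro hineq x
        by_cases hg0 : linePoly F x e = 0
        · rw [hg0]; exact Splits.zero
        apply splits_of_roots_real (linePoly F x e).natDegree _ le_rfl
        intro z hz
        by_contra him
        set x' : Fin 3 → ℝ := x + z.re • e with hx'
        have heval : (aeval ((z.im : ℂ) * Complex.I) (linePoly F x' e) : ℂ)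
            = aeval z (linePoly F x e) := by
          have hpt : (aeval ((z.im : ℂ) * Complex.I) (X + C z.re : ℝ[X]) : ℂ) = z := by
            rw [map_add, aeval_X, aeval_C]
            simp only [Complex.coe_algebraMap]
            rw [add_comm]
            exact Complex.re_add_im z
          rw [hx', linePoly_shift, aeval_comp, hpt]
        have hsum := hineq x' z.im
        rw [heval, hz] at hsum
        simp only [map_zero, mul_zero] at hsum
        have hterms : ∀ s ∈ Finset.range (m + 1),
            (z.im) ^ (2 * s) * (linePoly F x' e).coeff s ^ 2 = 0 := by
          rw [← Finset.sum_eq_zero_iff_of_nonneg]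
          · exact le_antisymm hsum (Finset.sum_nonneg fun s _ => by
              rw [pow_mul]; positivity)
          · intro s _
            rw [pow_mul]; positivity
        have hco : ∀ s, (linePoly F x' e).coeff s = 0 := by
          intro s
          rcases le_or_gt s m with hsm | hsm
          · have := hterms s (Finset.mem_range.mpr (by omega))
            have hb : (z.im) ^ (2 * s) ≠ 0 := pow_ne_zero _ him
            have := mul_eq_zero.mp this
            rcases this with h | h
            · exact absurd h hb
            · exact pow_eq_zero_iff (n := 2) (by norm_num) |>.mp h
          · exact coeff_eq_zero_of_natDegree_lt
              (lt_of_le_of_lt (linePoly_natDegree_le hhom x' e) hsm)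
        have hzero : linePoly F x' e = 0 := Polynomial.ext fun n => by rw [hco n, coeff_zero]
        have hcompzero : (linePoly F x e).comp (X + C z.re) = 0 := by
          rw [← linePoly_shift, ← hx', hzero]
        have : linePoly F x e = 0 := by
          have h1 : ((linePoly F x e).comp (X + C z.re)).comp (X - C z.re)
              = linePoly F x e := by
            rw [comp_assoc]
            simp [add_comp, sub_add_cancel]
          rw [← h1, hcompzero, zero_comp]
        exact hg0 this
    rw [hset]
    apply isClosed_iInter
    intro x
    apply isClosed_iInter
    intro b
    apply isClosed_le
    · apply continuous_finset_sum
      intro s _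
      exact continuous_const.mul ((continuous_linePoly_coeff F x s).pow 2)
    · exact continuous_const.mul
        (Complex.continuous_normSq.comp (continuous_linePoly_aeval F x _))
  · intro c e he x
    rw [show c • e = c • e from rfl, linePoly_smul]
    exact splits_comp_linear (he x) c
end

section
/- Let F be a nonzero homogeneous real polynomial of degree m ≥ 1 in three variables. If e ∈ ℝ³ is a hyperbolicity direction of F and F(e) ≠ 0, then e lies in the interior of the set H(F) of hyperbolicity directions of F; in particular H(F) has nonempty interior. (This openness statement underlies the paper's use, in Proposition 2, of the non-emptiness of the interior of hyp(C_p) for points q ∈ hyp(C) not lying on C.) -/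
open Polynomial

namespace HypAux

/-! ### Algebraic infrastructure -/

theorem eval_smul_homog {R : Type*} [CommRing R] {σ : Type*} {φ : MvPolynomial σ R} {m : ℕ}
    (h : φ.IsHomogeneous m) (c : R) (x : σ → R) :
    MvPolynomial.eval (c • x) φ = c ^ m * MvPolynomial.eval x φ := by
  conv_lhs => rw [φ.as_sum]
  conv_rhs => rw [φ.as_sum]
  rw [map_sum, map_sum, Finset.mul_sum]
  refine Finset.sum_congr rfl fun d hd => ?_
  have hdeg : d.degree = m := by
    by_contra hne
    exact (MvPolynomial.mem_support_iff.mp hd) (h.coeff_eq_zero hne)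
  rw [MvPolynomial.eval_monomial, MvPolynomial.eval_monomial]
  rw [Finsupp.prod, Finsupp.prod]
  have : (∏ i ∈ d.support, (c • x) i ^ d i) = c ^ m * ∏ i ∈ d.support, x i ^ d i := by
    simp only [Pi.smul_apply, smul_eq_mul, mul_pow]
    rw [Finset.prod_mul_distrib, Finset.prod_pow_eq_pow_sum]
    rw [← hdeg]; rfl
  rw [this]; ring

theorem lin_natDegree {w v : ℂ} : (C w + C v * X).natDegree ≤ 1 :=
  (natDegree_add_le _ _).trans (by
    simp only [natDegree_C, max_le_iff, Nat.zero_le, true_and]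
    exact (natDegree_C_mul_le _ _).trans (by simp))

theorem lin_coeff_one {w v : ℂ} : (C w + C v * X).coeff 1 = v := by
  simp [coeff_C]

theorem coeff_prod_of_natDegree_le' {R : Type*} [CommSemiring R] {ι : Type*} (s : Finset ι)
    (f : ι → R[X]) (d : ι → ℕ) (h : ∀ i ∈ s, (f i).natDegree ≤ d i) :
    (∏ i ∈ s, f i).coeff (∑ i ∈ s, d i) = ∏ i ∈ s, (f i).coeff (d i) := by
  classical
  induction s using Finset.induction with
  | empty => simp
  | @insert a s ha ih =>
      rw [Finset.prod_insert ha, Finset.sum_insert ha, Finset.prod_insert ha,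
        coeff_mul_add_eq_of_natDegree_le (h a (Finset.mem_insert_self a s))
          ((natDegree_prod_le _ _).trans (Finset.sum_le_sum fun i hi =>
            h i (Finset.mem_insert_of_mem hi))),
        ih fun i hi => h i (Finset.mem_insert_of_mem hi)]

theorem natDegree_line_le {σ : Type*} [Fintype σ] {φ : MvPolynomial σ ℂ} {m : ℕ}
    (h : φ.IsHomogeneous m) (w v : σ → ℂ) :
    (MvPolynomial.aeval (fun i => C (w i) + C (v i) * X) φ).natDegree ≤ m := by
  conv_lhs => rw [φ.as_sum]
  rw [map_sum]
  refine natDegree_sum_le_of_forall_le _ _ fun d hd => ?_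
  have hdeg : d.degree = m := by
    by_contra hne
    exact (MvPolynomial.mem_support_iff.mp hd) (h.coeff_eq_zero hne)
  rw [MvPolynomial.aeval_monomial]
  refine (natDegree_C_mul_le _ _).trans ?_
  rw [Finsupp.prod]
  refine (natDegree_prod_le _ _).trans ?_
  rw [← hdeg, Finsupp.degree]
  refine Finset.sum_le_sum fun i _ => ?_
  refine natDegree_pow_le.trans ?_
  calc d i * (C (w i) + C (v i) * X).natDegree ≤ d i * 1 := Nat.mul_le_mul_left _ lin_natDegree
  _ = d i := Nat.mul_one _

theorem coeff_line {σ : Type*} [Fintype σ] {φ : MvPolynomial σ ℂ} {m : ℕ}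
    (h : φ.IsHomogeneous m) (w v : σ → ℂ) :
    (MvPolynomial.aeval (fun i => C (w i) + C (v i) * X) φ).coeff m = MvPolynomial.eval v φ := by
  conv_lhs => rw [φ.as_sum]
  conv_rhs => rw [φ.as_sum]
  rw [map_sum, map_sum, finset_sum_coeff]
  refine Finset.sum_congr rfl fun d hd => ?_
  have hdeg : d.degree = m := by
    by_contra hne
    exact (MvPolynomial.mem_support_iff.mp hd) (h.coeff_eq_zero hne)
  rw [MvPolynomial.aeval_monomial, MvPolynomial.eval_monomial, Finsupp.prod, Finsupp.prod]
  have halg : (algebraMap ℂ ℂ[X]) (MvPolynomial.coeff d φ) = C (MvPolynomial.coeff d φ) := rfl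
  rw [halg, coeff_C_mul, ← hdeg, Finsupp.degree_apply,
    coeff_prod_of_natDegree_le' _ _ _ fun i _ => natDegree_pow_le.trans (by
      calc d i * (C (w i) + C (v i) * X).natDegree ≤ d i * 1 := Nat.mul_le_mul_left _ lin_natDegree
      _ = d i := Nat.mul_one _)]
  refine congrArg _ (Finset.prod_congr rfl fun i _ => ?_)
  have := coeff_pow_of_natDegree_le (p := C (w i) + C (v i) * X) (n := 1) (m := d i) lin_natDegree
  rw [mul_one] at this
  rw [this, lin_coeff_one]

theorem eval_aeval_line {σ : Type*} (φ : MvPolynomial σ ℂ) (w v : σ → ℂ) (t : ℂ) :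
    (MvPolynomial.aeval (fun i => C (w i) + C (v i) * X) φ).eval t
      = MvPolynomial.eval (fun i => w i + t * v i) φ := by
  rw [MvPolynomial.aeval_def]
  have h1 : (MvPolynomial.eval₂ (algebraMap ℂ ℂ[X]) (fun i => C (w i) + C (v i) * X) φ).eval t
      = (Polynomial.evalRingHom t)
          (MvPolynomial.eval₂ (algebraMap ℂ ℂ[X]) (fun i => C (w i) + C (v i) * X) φ) := rfl
  rw [h1, MvPolynomial.eval₂_comp_left (Polynomial.evalRingHom t)
    (algebraMap ℂ ℂ[X]) (fun i => C (w i) + C (v i) * X) φ]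
  have h2 : ((Polynomial.evalRingHom t).comp (algebraMap ℂ ℂ[X])) = RingHom.id ℂ :=
    RingHom.ext fun a => by simp
  rw [h2]
  have h3 : ((Polynomial.evalRingHom t) ∘ fun i => C (w i) + C (v i) * X)
      = fun i => w i + t * v i := by
    funext i
    simp only [Function.comp_apply, coe_evalRingHom, eval_add, eval_mul, eval_C, eval_X]
    ring
  rw [h3, MvPolynomial.eval₂_id]

theorem map_aeval_line (F : MvPolynomial (Fin 3) ℝ) (x v : Fin 3 → ℝ) :
    (MvPolynomial.aeval (fun i => C (x i) + C (v i) * X) F).map (algebraMap ℝ ℂ)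
      = MvPolynomial.aeval (fun i => C ((x i : ℝ) : ℂ) + C (((v i : ℝ)) : ℂ) * X)
          (MvPolynomial.map (algebraMap ℝ ℂ) F) := by
  rw [MvPolynomial.aeval_def, MvPolynomial.aeval_def, MvPolynomial.eval₂_map]
  have h1 : (MvPolynomial.eval₂ (algebraMap ℝ ℝ[X]) (fun i => C (x i) + C (v i) * X) F).map
      (algebraMap ℝ ℂ) = (Polynomial.mapRingHom (algebraMap ℝ ℂ))
        (MvPolynomial.eval₂ (algebraMap ℝ ℝ[X]) (fun i => C (x i) + C (v i) * X) F) := rfl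
  rw [h1, MvPolynomial.eval₂_comp_left (Polynomial.mapRingHom (algebraMap ℝ ℂ))
    (algebraMap ℝ ℝ[X]) (fun i => C (x i) + C (v i) * X) F]
  congr 1
  · exact RingHom.ext fun a => by simp
  · funext i; simp

theorem conj_eval (F : MvPolynomial (Fin 3) ℝ) (w : Fin 3 → ℂ) :
    (starRingEnd ℂ) (MvPolynomial.eval w (MvPolynomial.map (algebraMap ℝ ℂ) F))
      = MvPolynomial.eval (fun i => (starRingEnd ℂ) (w i)) (MvPolynomial.map (algebraMap ℝ ℂ) F) := by
  rw [MvPolynomial.eval_map, MvPolynomial.eval_map,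
    MvPolynomial.eval₂_comp_left (starRingEnd ℂ) (algebraMap ℝ ℂ) w F]
  congr 1
  exact RingHom.ext fun a => by simp

theorem eval_real (F : MvPolynomial (Fin 3) ℝ) (y : Fin 3 → ℝ) :
    MvPolynomial.eval (fun i => ((y i : ℝ) : ℂ)) (MvPolynomial.map (algebraMap ℝ ℂ) F)
      = ((MvPolynomial.eval y F : ℝ) : ℂ) := by
  rw [MvPolynomial.eval_map]
  have := MvPolynomial.eval₂_comp_left (algebraMap ℝ ℂ) (RingHom.id ℝ) y F
  rw [MvPolynomial.eval₂_id, RingHom.comp_id] at this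
  exact this.symm

theorem pow_card_le_prod_multiset (s : Multiset ℝ) (ε : ℝ) (hε : 0 ≤ ε)
    (h : ∀ x ∈ s, ε ≤ x) : ε ^ Multiset.card s ≤ s.prod := by
  induction s using Multiset.induction with
  | empty => simp
  | cons a s ih =>
      rw [Multiset.prod_cons, Multiset.card_cons, pow_succ, mul_comm]
      have ha := h a (Multiset.mem_cons_self a s)
      exact mul_le_mul ha (ih fun x hx => h x (Multiset.mem_cons_of_mem hx))
        (pow_nonneg hε _) (le_trans hε ha)

theorem eval_abs_bound (q : Polynomial ℂ) (t : ℂ) (ε : ℝ) (hε : 0 ≤ ε)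
    (h : ∀ r ∈ q.roots, ε ≤ ‖t - r‖) :
    ‖q.leadingCoeff‖ * ε ^ Multiset.card q.roots ≤ ‖q.eval t‖ := by
  have hsplit : q.Splits := IsAlgClosed.splits q
  conv_rhs => rw [hsplit.eq_prod_roots]
  have hn : ∀ s : Multiset ℂ, ‖s.prod‖ = (s.map (‖·‖)).prod :=
    fun s => map_multiset_prod (normHom : ℂ →*₀ ℝ) s
  rw [eval_mul, eval_C, norm_mul, eval_multiset_prod, hn]
  refine mul_le_mul_of_nonneg_left ?_ (norm_nonneg _)
  rw [Multiset.map_map, Multiset.map_map]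
  have hcard : Multiset.card q.roots
      = Multiset.card (q.roots.map fun a => ‖(X - C a).eval t‖) := by
    rw [Multiset.card_map]
  rw [hcard]
  refine pow_card_le_prod_multiset _ _ hε fun x hx => ?_
  obtain ⟨r, hr, rfl⟩ := Multiset.mem_map.mp hx
  simpa using h r hr

theorem splits_of_roots_real (p : Polynomial ℝ)
    (h : ∀ z ∈ (p.map (algebraMap ℝ ℂ)).roots, z.im = 0) : p.Splits := by
  classical
  have hinj : Function.Injective (algebraMap ℝ ℂ) := (algebraMap ℝ ℂ).injective
  have key : p.roots.map (fun r : ℝ => (r : ℂ)) = (p.map (algebraMap ℝ ℂ)).roots := by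
    refine Multiset.ext.mpr fun z => ?_
    by_cases hz : z.im = 0
    · have hzre : z = ((z.re : ℝ) : ℂ) := Complex.ext rfl (by simp [hz])
      rw [hzre, Multiset.count_map_eq_count' _ _ Complex.ofReal_injective,
        count_roots, count_roots, eq_rootMultiplicity_map hinj]
      rfl
    · rw [Multiset.count_eq_zero.mpr, Multiset.count_eq_zero.mpr]
      · intro hmem
        exact hz (h z hmem)
      · intro hmem
        obtain ⟨r, _, rfl⟩ := Multiset.mem_map.mp hmem
        exact hz rfl
  rw [splits_iff_card_roots]
  have h1 : Multiset.card (p.map (algebraMap ℝ ℂ)).roots = (p.map (algebraMap ℝ ℂ)).natDegree :=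
    splits_iff_card_roots.mp (IsAlgClosed.splits _)
  calc Multiset.card p.roots
      = Multiset.card (p.roots.map (fun r : ℝ => (r : ℂ))) := (Multiset.card_map _ _).symm
    _ = Multiset.card (p.map (algebraMap ℝ ℂ)).roots := by rw [key]
    _ = (p.map (algebraMap ℝ ℂ)).natDegree := h1
    _ = p.natDegree := natDegree_map_eq_of_injective hinj p

open Filter in
theorem im_nonpos_of_roots_im_neg {φ : MvPolynomial (Fin 3) ℂ} {m : ℕ} (hm : 1 ≤ m)
    (hhom : φ.IsHomogeneous m) (w : ℕ → Fin 3 → ℂ) (v : ℕ → Fin 3 → ℂ)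
    (w' v' : Fin 3 → ℂ) (hw : Tendsto w atTop (nhds w')) (hv : Tendsto v atTop (nhds v'))
    (hv0 : MvPolynomial.eval v' φ ≠ 0)
    (hroots : ∀ n, ∀ r ∈ (MvPolynomial.aeval
        (fun i => C (w n i) + C (v n i) * X) φ).roots, r.im < 0)
    (t : ℂ) (ht : MvPolynomial.eval (fun i => w' i + t * v' i) φ = 0) : t.im ≤ 0 := by
  by_contra hpos
  push_neg at hpos
  set ε := t.im with hε
  -- continuity facts
  have hcont : Continuous fun z : Fin 3 → ℂ => MvPolynomial.eval z φ :=
    MvPolynomial.continuous_eval φ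
  have hlead : Tendsto (fun n => ‖MvPolynomial.eval (v n) φ‖) atTop
      (nhds (‖MvPolynomial.eval v' φ‖)) :=
    (continuous_norm.tendsto _).comp ((hcont.tendsto v').comp hv)
  have harg : Tendsto (fun n => fun i => w n i + t * v n i) atTop
      (nhds (fun i => w' i + t * v' i)) := by
    rw [tendsto_pi_nhds]
    intro i
    exact ((tendsto_pi_nhds.mp hw i).add ((tendsto_pi_nhds.mp hv i).const_mul t))
  have hval : Tendsto (fun n => ‖
      (MvPolynomial.eval (fun i => w n i + t * v n i) φ)‖) atTop (nhds 0) := by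
    have := (continuous_norm.tendsto _).comp ((hcont.tendsto _).comp harg)
    rwa [ht, norm_zero] at this
  set c := ‖MvPolynomial.eval v' φ‖ with hc
  have hcpos : 0 < c := by
    simpa [hc, norm_pos_iff] using hv0
  have hεm : (0:ℝ) < ε ^ m := pow_pos hpos m
  have hev1 : ∀ᶠ n in atTop, c/2 < ‖MvPolynomial.eval (v n) φ‖ :=
    hlead.eventually_const_lt (half_lt_self hcpos)
  have hev2 : ∀ᶠ n in atTop, ‖
      (MvPolynomial.eval (fun i => w n i + t * v n i) φ)‖ < (c/2) * ε ^ m :=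
    hval.eventually_lt_const (by positivity)
  obtain ⟨n, h1, h2⟩ := (hev1.and hev2).exists
  set q := MvPolynomial.aeval (fun i => C (w n i) + C (v n i) * X) φ with hq
  have hlead0 : MvPolynomial.eval (v n) φ ≠ 0 := by
    intro h0
    rw [h0] at h1
    simp at h1
    linarith
  have hcoeffm : q.coeff m = MvPolynomial.eval (v n) φ := coeff_line hhom _ _
  have hdeg : q.natDegree = m :=
    le_antisymm (natDegree_line_le hhom _ _)
      (le_natDegree_of_ne_zero (by rw [hcoeffm]; exact hlead0))
  have hq0 : q ≠ 0 := fun h0 => by simp [h0] at hcoeffm; exact hlead0 hcoeffm.symm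
  have hcard : Multiset.card q.roots = m := by
    rw [← hdeg]
    exact splits_iff_card_roots.mp (IsAlgClosed.splits q)
  have hbnd := eval_abs_bound q t ε (le_of_lt hpos) ?_
  · rw [hcard] at hbnd
    have hlc : q.leadingCoeff = MvPolynomial.eval (v n) φ := by
      rw [leadingCoeff, hdeg, hcoeffm]
    rw [hlc, eval_aeval_line] at hbnd
    have : (c/2) * ε ^ m < ‖MvPolynomial.eval (v n) φ‖ * ε ^ m :=
      mul_lt_mul_of_pos_right h1 hεm
    linarith
  · intro r hr
    have him := hroots n r hr
    have : ε < (t - r).im := by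
      simp only [Complex.sub_im]
      linarith
    calc ε ≤ |(t - r).im| := le_trans (le_of_lt this) (le_abs_self _)
    _ ≤ ‖t - r‖ := Complex.abs_im_le_norm _

end HypAux

theorem stmt_3 (m : ℕ) (hm : 1 ≤ m) (F : MvPolynomial (Fin 3) ℝ) (hF : F ≠ 0)
    (hhom : F.IsHomogeneous m) (e : Fin 3 → ℝ)
    (he : IsHypDir F e) (hne : MvPolynomial.eval e F ≠ 0) :
    e ∈ interior {v : Fin 3 → ℝ | IsHypDir F v} ∧
      (interior {v : Fin 3 → ℝ | IsHypDir F v}).Nonempty := by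
  classical
  open HypAux Filter in
  set Fc := MvPolynomial.map (algebraMap ℝ ℂ) F with hFcdef
  have hhomC : Fc.IsHomogeneous m := hhom.map _
  have hcontC : Continuous fun z : Fin 3 → ℂ => MvPolynomial.eval z Fc :=
    MvPolynomial.continuous_eval Fc
  have hcontR : Continuous fun y : Fin 3 → ℝ => MvPolynomial.eval y F :=
    MvPolynomial.continuous_eval F
  set S : Set (Fin 3 → ℝ) := {v | MvPolynomial.eval v F ≠ 0} with hSdef
  have hSopen : IsOpen S := isOpen_compl_singleton.preimage hcontR
  set Cset := connectedComponentIn S e with hCsetdef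
  have heS : e ∈ S := hne
  have heC : e ∈ Cset := mem_connectedComponentIn heS
  have hCS : Cset ⊆ S := connectedComponentIn_subset _ _
  -- Step 1 : hyperbolicity of `e` means no zeros off the real axis on real lines in direction `e`
  have hA' : ∀ (y : Fin 3 → ℝ) (z : ℂ), z.im ≠ 0 →
      MvPolynomial.eval (fun i => ((y i : ℝ) : ℂ) + z * ((e i : ℝ) : ℂ)) Fc ≠ 0 := by
    intro y z hz h0
    have hsp : (linePoly F y e).Splits := he y
    have hmapEq : (linePoly F y e).map (algebraMap ℝ ℂ)
        = MvPolynomial.aeval (fun i => C ((y i : ℝ) : ℂ) + C ((e i : ℝ) : ℂ) * X) Fc :=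
      map_aeval_line F y e
    have hp0 : linePoly F y e ≠ 0 := by
      intro h0'
      have hcm := coeff_line (φ := Fc) hhomC (fun i => ((y i : ℝ) : ℂ)) (fun i => ((e i : ℝ) : ℂ))
      rw [← hmapEq, h0'] at hcm
      rw [eval_real] at hcm
      simp only [Polynomial.map_zero, coeff_zero] at hcm
      exact hne (by exact_mod_cast hcm.symm)
    have hroots : ∀ z' ∈ ((linePoly F y e).map (algebraMap ℝ ℂ)).roots, z'.im = 0 := by
      rw [hsp.roots_map]
      intro z' hz'
      obtain ⟨r, _, rfl⟩ := Multiset.mem_map.mp hz'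
      simp
    have hzmem : z ∈ ((linePoly F y e).map (algebraMap ℝ ℂ)).roots := by
      rw [mem_roots (map_ne_zero hp0)]
      rw [IsRoot, hmapEq, eval_aeval_line]
      exact h0
    exact hz (hroots z hzmem)
  -- Step 2
  have hstep2 : ∀ (x : Fin 3 → ℝ) (s : ℝ), 0 < s → ∀ v ∈ Cset, ∀ t : ℂ, 0 ≤ t.im →
      MvPolynomial.eval
        (fun i => (((x i : ℝ) : ℂ) + (s * Complex.I) * ((e i : ℝ) : ℂ)) + t * ((v i : ℝ) : ℂ))
        Fc ≠ 0 := by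
    intro x s hs
    set W : Fin 3 → ℂ := fun i => ((x i : ℝ) : ℂ) + (s * Complex.I) * ((e i : ℝ) : ℂ) with hWdef
    set B : Set (Fin 3 → ℝ) := {v | ∀ t : ℂ, 0 ≤ t.im →
      MvPolynomial.eval (fun i => W i + t * ((v i : ℝ) : ℂ)) Fc ≠ 0} with hBdef
    suffices hCB : Cset ⊆ B by
      intro v hv t ht
      exact hCB hv t ht
    have heB : e ∈ B := by
      intro t ht h0
      have harg : (fun i => W i + t * ((e i : ℝ) : ℂ))
          = fun i => ((x i : ℝ) : ℂ) + (s * Complex.I + t) * ((e i : ℝ) : ℂ) := by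
        funext i
        simp only [hWdef]
        ring
      rw [harg] at h0
      refine hA' x (s * Complex.I + t) ?_ h0
      have : (↑s * Complex.I + t).im = s + t.im := by
        simp
      rw [this]
      intro hzero
      linarith
    -- relative closedness of B in Cset
    have hclosed : ∀ v ∈ Cset, v ∈ closure (Cset ∩ B) → v ∈ B := by
      intro v hvC hvcl
      obtain ⟨u, hu_mem, hu_lim⟩ := mem_closure_iff_seq_limit.mp hvcl
      by_contra hvB
      simp only [hBdef, Set.mem_setOf_eq] at hvB
      push_neg at hvB
      obtain ⟨t, ht, h0⟩ := hvB
      have hPhiv : MvPolynomial.eval (fun i => ((v i : ℝ) : ℂ)) Fc ≠ 0 := by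
        rw [eval_real]
        exact_mod_cast hCS hvC
      have hkey := im_nonpos_of_roots_im_neg hm hhomC (fun _ => W)
        (fun n => fun i => ((u n i : ℝ) : ℂ)) W (fun i => ((v i : ℝ) : ℂ))
        tendsto_const_nhds ?_ hPhiv ?_ t h0
      · have htim : t.im = 0 := le_antisymm hkey ht
        obtain ⟨τ, rfl⟩ : ∃ τ : ℝ, t = (τ : ℂ) := ⟨t.re, Complex.ext rfl (by simp [htim])⟩
        have harg : (fun i => W i + (τ : ℂ) * ((v i : ℝ) : ℂ))
            = fun i => (((fun j => x j + τ * v j) i : ℝ) : ℂ)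
                + (s * Complex.I) * ((e i : ℝ) : ℂ) := by
          funext i
          simp only [hWdef]
          push_cast
          ring
        rw [harg] at h0
        refine hA' (fun j => x j + τ * v j) (s * Complex.I) ?_ h0
        simp
        intro hzero
        linarith
      · rw [tendsto_pi_nhds]
        intro i
        exact (Complex.continuous_ofReal.tendsto _).comp
          (((continuous_apply i).tendsto v).comp hu_lim)
      · intro n r hr
        by_contra hrim
        push_neg at hrim
        have hroot : MvPolynomial.eval (fun i => W i + r * ((u n i : ℝ) : ℂ)) Fc = 0 := by
          have hr2 := (mem_roots'.mp hr).2
          rwa [IsRoot, eval_aeval_line] at hr2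
        exact (hu_mem n).2 r hrim hroot
    -- openness of B ∩ S
    have hv0BS : ∀ v₀ ∈ B ∩ S, ∃ δ > 0, Metric.ball v₀ δ ⊆ B ∩ S := by
      rintro v₀ ⟨hv₀B, hv₀S⟩
      obtain ⟨δ₀, hδ₀, hδ₀S⟩ := Metric.isOpen_iff.mp hSopen v₀ hv₀S
      by_contra hcon
      push_neg at hcon
      have hseq : ∀ n : ℕ, ∃ u, dist u v₀ < min δ₀ (1/(n+1) : ℝ) ∧ u ∉ B := by
        intro n
        have hmin : 0 < min δ₀ (1/(n+1) : ℝ) := lt_min hδ₀ (by positivity)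
        have h1 := hcon (min δ₀ (1/(n+1) : ℝ)) hmin
        rw [Set.not_subset] at h1
        obtain ⟨u, hu1, hu2⟩ := h1
        refine ⟨u, Metric.mem_ball.mp hu1, fun huB => hu2 ⟨huB, ?_⟩⟩
        exact hδ₀S (Metric.mem_ball.mpr (lt_of_lt_of_le (Metric.mem_ball.mp hu1) (min_le_left _ _)))
      choose u hu1 hu2 using hseq
      have hdistu : ∀ n : ℕ, dist (u n) v₀ < (1/(n+1) : ℝ) :=
        fun n => lt_of_lt_of_le (hu1 n) (min_le_right _ _)
      have hu_lim : Filter.Tendsto u Filter.atTop (nhds v₀) := by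
        rw [tendsto_iff_dist_tendsto_zero]
        refine squeeze_zero (fun n => dist_nonneg) (fun n => le_of_lt (hdistu n)) ?_
        exact tendsto_one_div_add_atTop_nhds_zero_nat
      -- choose bad t's
      have hts : ∀ n : ℕ, ∃ t : ℂ, 0 ≤ t.im ∧
          MvPolynomial.eval (fun i => W i + t * ((u n i : ℝ) : ℂ)) Fc = 0 := by
        intro n
        have := hu2 n
        simp only [hBdef, Set.mem_setOf_eq] at this
        push_neg at this
        exact this
      choose ts hts1 hts2 using hts
      -- zero-free ball around the complexification of v₀
      have hv₀C : MvPolynomial.eval (fun i => ((v₀ i : ℝ) : ℂ)) Fc ≠ 0 := by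
        rw [eval_real]
        exact_mod_cast hv₀S
      have hZopen : IsOpen {z : Fin 3 → ℂ | MvPolynomial.eval z Fc ≠ 0} :=
        isOpen_compl_singleton.preimage hcontC
      obtain ⟨η, hη, hηball⟩ := Metric.isOpen_iff.mp hZopen _ hv₀C
      set R : ℝ := 2 * (‖W‖ + 1) / η with hRdef
      have hRpos : 0 < R := by positivity
      -- a uniform bound on the bad roots
      have hbound : ∀ n : ℕ, dist (u n) v₀ < η / 2 → ‖ts n‖ ≤ R := by
        intro n hdn
        by_contra habs
        push_neg at habs
        have htsne : ts n ≠ 0 := by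
          intro h0'
          rw [h0'] at habs
          simp at habs
          linarith
        -- rescale by (ts n)⁻¹
        have hscale := eval_smul_homog (R := ℂ) hhomC ((ts n)⁻¹)
          (fun i => W i + ts n * ((u n i : ℝ) : ℂ))
        rw [hts2 n, mul_zero] at hscale
        have hmem : ((ts n)⁻¹ • fun i => W i + ts n * ((u n i : ℝ) : ℂ))
            ∈ Metric.ball (fun i => ((v₀ i : ℝ) : ℂ)) η := by
          rw [Metric.mem_ball, dist_pi_lt_iff hη]
          intro i
          have hcoord : ((ts n)⁻¹ • fun i => W i + ts n * ((u n i : ℝ) : ℂ)) i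
              = (ts n)⁻¹ * W i + ((u n i : ℝ) : ℂ) := by
            simp only [Pi.smul_apply, smul_eq_mul]
            field_simp
          rw [hcoord]
          have h1 : dist ((ts n)⁻¹ * W i + ((u n i : ℝ) : ℂ)) ((v₀ i : ℝ) : ℂ)
              ≤ ‖(ts n)⁻¹ * W i‖ + dist ((u n i : ℝ) : ℂ) ((v₀ i : ℝ) : ℂ) := by
            rw [dist_eq_norm, dist_eq_norm]
            have : (ts n)⁻¹ * W i + ((u n i : ℝ) : ℂ) - ((v₀ i : ℝ) : ℂ)
                = (ts n)⁻¹ * W i + (((u n i : ℝ) : ℂ) - ((v₀ i : ℝ) : ℂ)) := by ring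
            rw [this]
            exact norm_add_le _ _
          have h2 : ‖(ts n)⁻¹ * W i‖ < η / 2 := by
            rw [norm_mul, norm_inv]
            have hWi : ‖W i‖ ≤ ‖W‖ + 1 := by
              have hn := norm_le_pi_norm W i
              linarith
            have habs_pos : 0 < ‖ts n‖ := lt_trans hRpos habs
            have hW1 : (0:ℝ) < ‖W‖ + 1 := by positivity
            have hinv : (‖ts n‖)⁻¹ < η / (2 * (‖W‖ + 1)) := by
              rw [inv_eq_one_div, div_lt_div_iff₀ habs_pos (by positivity)]
              have h' := (div_lt_iff₀ hη).mp habs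
              linarith
            calc (‖ts n‖)⁻¹ * ‖W i‖
                ≤ (‖ts n‖)⁻¹ * (‖W‖ + 1) :=
                  mul_le_mul_of_nonneg_left hWi (by positivity)
              _ < (η / (2 * (‖W‖ + 1))) * (‖W‖ + 1) := mul_lt_mul_of_pos_right hinv hW1
              _ = η / 2 := by field_simp
          have h3 : dist ((u n i : ℝ) : ℂ) ((v₀ i : ℝ) : ℂ) < η / 2 := by
            have : dist ((u n i : ℝ) : ℂ) ((v₀ i : ℝ) : ℂ) = dist (u n i) (v₀ i) := by
              rw [Complex.dist_eq, Real.dist_eq, ← Complex.ofReal_sub, Complex.norm_real, Real.norm_eq_abs]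
            rw [this]
            exact lt_of_le_of_lt (dist_le_pi_dist (u n) v₀ i) hdn
          calc dist ((ts n)⁻¹ * W i + ((u n i : ℝ) : ℂ)) ((v₀ i : ℝ) : ℂ)
              ≤ ‖(ts n)⁻¹ * W i‖ + dist ((u n i : ℝ) : ℂ) ((v₀ i : ℝ) : ℂ) := h1
            _ < η / 2 + η / 2 := add_lt_add h2 h3
            _ = η := by ring
        have := hηball hmem
        exact this hscale
      -- pass to a convergent subsequence of the bad roots
      obtain ⟨N, hN⟩ := Metric.tendsto_atTop.mp hu_lim (η / 2) (by positivity)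
      have htsball : ∀ k : ℕ, ts (k + N) ∈ Metric.closedBall (0 : ℂ) R := by
        intro k
        rw [Metric.mem_closedBall, dist_zero_right]
        have := hbound (k + N) (hN (k + N) (Nat.le_add_left N k))
        simpa using this
      obtain ⟨a, haball, φ, hφ, hφlim⟩ :=
        (isCompact_closedBall (0 : ℂ) R).tendsto_subseq htsball
      have haim : 0 ≤ a.im := by
        refine ge_of_tendsto ((Complex.continuous_im.tendsto a).comp hφlim) ?_
        filter_upwards with k
        exact hts1 (φ k + N)
      have hzero : MvPolynomial.eval (fun i => W i + a * ((v₀ i : ℝ) : ℂ)) Fc = 0 := by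
        have hargk : Filter.Tendsto
            (fun k => fun i => W i + ts (φ k + N) * ((u (φ k + N) i : ℝ) : ℂ))
            Filter.atTop (nhds (fun i => W i + a * ((v₀ i : ℝ) : ℂ))) := by
          rw [tendsto_pi_nhds]
          intro i
          have husub : Filter.Tendsto (fun k => u (φ k + N)) Filter.atTop (nhds v₀) :=
            hu_lim.comp ((Filter.tendsto_add_atTop_nat N).comp hφ.tendsto_atTop)
          have hui : Filter.Tendsto (fun k => ((u (φ k + N) i : ℝ) : ℂ)) Filter.atTop
              (nhds ((v₀ i : ℝ) : ℂ)) :=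
            (Complex.continuous_ofReal.tendsto _).comp (((continuous_apply i).tendsto v₀).comp husub)
          exact tendsto_const_nhds.add (hφlim.mul hui)
        have h1 : Filter.Tendsto
            (fun k => MvPolynomial.eval
              (fun i => W i + ts (φ k + N) * ((u (φ k + N) i : ℝ) : ℂ)) Fc)
            Filter.atTop (nhds (MvPolynomial.eval (fun i => W i + a * ((v₀ i : ℝ) : ℂ)) Fc)) :=
          (hcontC.tendsto _).comp hargk
        have h2 : (fun k => MvPolynomial.eval
            (fun i => W i + ts (φ k + N) * ((u (φ k + N) i : ℝ) : ℂ)) Fc) = fun _ => 0 := by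
          funext k
          exact hts2 (φ k + N)
        rw [h2] at h1
        exact tendsto_nhds_unique h1 tendsto_const_nhds
      exact hv₀B a haim hzero
    -- connectedness argument
    intro v hv
    by_contra hvB
    have hpre : IsPreconnected Cset := isPreconnected_connectedComponentIn
    have hUopen : IsOpen (B ∩ S) := by
      rw [Metric.isOpen_iff]
      intro v₀ hv₀
      obtain ⟨δ, hδ, hδball⟩ := hv0BS v₀ hv₀
      exact ⟨δ, hδ, hδball⟩
    have hcover : Cset ⊆ (B ∩ S) ∪ (closure (Cset ∩ B))ᶜ := by
      intro w hw
      by_cases hwc : w ∈ closure (Cset ∩ B)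
      · exact Or.inl ⟨hclosed w hw hwc, hCS hw⟩
      · exact Or.inr hwc
    obtain ⟨w', hw'C, hw'U, hw'V⟩ := hpre (B ∩ S) (closure (Cset ∩ B))ᶜ hUopen
      (isClosed_closure.isOpen_compl) hcover ⟨e, heC, heB, heS⟩
      ⟨v, hv, fun hcl => hvB (hclosed v hv hcl)⟩
    exact hw'V (subset_closure ⟨hw'C, hw'U.1⟩)
  -- Step 3 : every element of the component is a hyperbolicity direction
  have hstep3 : ∀ v ∈ Cset, IsHypDir F v := by
    intro v hv x
    have hvS : MvPolynomial.eval v F ≠ 0 := hCS hv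
    have hPhiv : MvPolynomial.eval (fun i => ((v i : ℝ) : ℂ)) Fc ≠ 0 := by
      rw [eval_real]
      exact_mod_cast hvS
    have hupper : ∀ z : ℂ, 0 < z.im →
        MvPolynomial.eval (fun i => ((x i : ℝ) : ℂ) + z * ((v i : ℝ) : ℂ)) Fc ≠ 0 := by
      intro z hzpos h0
      have hkey := im_nonpos_of_roots_im_neg hm hhomC
        (fun (n : ℕ) => fun i => ((x i : ℝ) : ℂ) + ((1/(n+1) : ℝ) * Complex.I) * ((e i : ℝ) : ℂ))
        (fun _ => fun i => ((v i : ℝ) : ℂ)) (fun i => ((x i : ℝ) : ℂ)) (fun i => ((v i : ℝ) : ℂ))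
        ?_ tendsto_const_nhds hPhiv ?_ z h0
      · linarith
      · rw [tendsto_pi_nhds]
        intro i
        have h1 : Filter.Tendsto (fun n : ℕ => (1/(n+1) : ℝ)) Filter.atTop (nhds 0) :=
          tendsto_one_div_add_atTop_nhds_zero_nat
        have h2 : Filter.Tendsto (fun n : ℕ => ((1/(n+1) : ℝ) : ℂ)) Filter.atTop (nhds 0) := by
          rw [show ((0:ℂ)) = ((0:ℝ):ℂ) by simp]
          exact (Complex.continuous_ofReal.tendsto _).comp h1
        have h3 : Filter.Tendsto
            (fun n : ℕ => ((1/(n+1) : ℝ) : ℂ) * Complex.I * ((e i : ℝ) : ℂ))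
            Filter.atTop (nhds 0) := by
          simpa using (h2.mul_const Complex.I).mul_const ((e i : ℝ) : ℂ)
        simpa using tendsto_const_nhds.add h3
      · intro n r hr
        by_contra him
        push_neg at him
        have hroot : MvPolynomial.eval
            (fun i => (((x i : ℝ) : ℂ) + ((1/(n+1) : ℝ) * Complex.I) * ((e i : ℝ) : ℂ))
              + r * ((v i : ℝ) : ℂ)) Fc = 0 := by
          have hr2 := (mem_roots'.mp hr).2
          rwa [IsRoot, eval_aeval_line] at hr2
        exact hstep2 x (1/(n+1) : ℝ) (by positivity) v hv r him hroot
    refine splits_of_roots_real _ fun z hz => ?_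
    have hmapEq : (linePoly F x v).map (algebraMap ℝ ℂ)
        = MvPolynomial.aeval (fun i => C ((x i : ℝ) : ℂ) + C ((v i : ℝ) : ℂ) * X) Fc :=
      map_aeval_line F x v
    have hzero : MvPolynomial.eval (fun i => ((x i : ℝ) : ℂ) + z * ((v i : ℝ) : ℂ)) Fc = 0 := by
      have hr2 := (mem_roots'.mp hz).2
      rwa [IsRoot, hmapEq, eval_aeval_line] at hr2
    by_contra hzim
    rcases lt_or_gt_of_ne hzim with hneg | hpos2
    · have hconjarg : (fun i => (starRingEnd ℂ) (((x i : ℝ) : ℂ) + z * ((v i : ℝ) : ℂ)))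
          = fun i => ((x i : ℝ) : ℂ) + ((starRingEnd ℂ) z) * ((v i : ℝ) : ℂ) := by
        funext i
        simp
      have hconj := conj_eval F (fun i => ((x i : ℝ) : ℂ) + z * ((v i : ℝ) : ℂ))
      rw [hzero, map_zero, hconjarg] at hconj
      exact hupper ((starRingEnd ℂ) z) (by simpa using neg_pos.mpr hneg) hconj.symm
    · exact hupper z hpos2 hzero
  -- Conclusion
  obtain ⟨r, hrpos, hball⟩ := Metric.isOpen_iff.mp hSopen e heS
  have hballC : Metric.ball e r ⊆ Cset :=
    (convex_ball e r).isPreconnected.subset_connectedComponentIn (Metric.mem_ball_self hrpos) hball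
  have hmem : e ∈ interior {v | IsHypDir F v} :=
    mem_interior.mpr ⟨Metric.ball e r, fun v hv => hstep3 v (hballC hv), Metric.isOpen_ball,
      Metric.mem_ball_self hrpos⟩
  exact ⟨hmem, ⟨e, hmem⟩⟩
end

section
/- Let F(X, Y, Z) = Z·Y² − X³ (the cuspidal plane cubic, with cusp at the point (0 : 0 : 1)). Then the set of hyperbolicity directions of F is exactly the line ℝ·(0, 0, 1): a vector e ∈ ℝ³ is a hyperbolicity direction of F if and only if e is a scalar multiple of (0, 0, 1). (This is the paper's example: for a cuspidal cubic C, the set hyp(C) consists of the cusp only.) -/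
open Polynomial

lemma lp_eq (x e : Fin 3 → ℝ) :
    linePoly (MvPolynomial.X 2 * MvPolynomial.X 1 ^ 2 - MvPolynomial.X 0 ^ 3 :
        MvPolynomial (Fin 3) ℝ) x e =
      C (x 2 * x 1 ^ 2 - x 0 ^ 3)
        + C (2 * x 1 * x 2 * e 1 + x 1 ^ 2 * e 2 - 3 * x 0 ^ 2 * e 0) * X
        + C (x 2 * e 1 ^ 2 + 2 * x 1 * e 1 * e 2 - 3 * x 0 * e 0 ^ 2) * X ^ 2
        + C (e 2 * e 1 ^ 2 - e 0 ^ 3) * X ^ 3 := by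
  simp only [linePoly, map_sub, map_mul, map_pow, MvPolynomial.aeval_X, map_add, map_ofNat,
    Polynomial.C_mul, Polynomial.C_add, Polynomial.C_sub, Polynomial.C_pow]
  ring

lemma lp_coeff3 (x e : Fin 3 → ℝ) :
    (linePoly (MvPolynomial.X 2 * MvPolynomial.X 1 ^ 2 - MvPolynomial.X 0 ^ 3 :
        MvPolynomial (Fin 3) ℝ) x e).coeff 3 = e 2 * e 1 ^ 2 - e 0 ^ 3 := by
  rw [lp_eq]
  simp only [coeff_add, coeff_C_mul, coeff_X_pow, coeff_X, coeff_C]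
  norm_num

lemma lp_coeff2 (x e : Fin 3 → ℝ) :
    (linePoly (MvPolynomial.X 2 * MvPolynomial.X 1 ^ 2 - MvPolynomial.X 0 ^ 3 :
        MvPolynomial (Fin 3) ℝ) x e).coeff 2
      = x 2 * e 1 ^ 2 + 2 * x 1 * e 1 * e 2 - 3 * x 0 * e 0 ^ 2 := by
  rw [lp_eq]
  simp only [coeff_add, coeff_C_mul, coeff_X_pow, coeff_X, coeff_C]
  norm_num

lemma lp_aeval (x e : Fin 3 → ℝ) (z : ℂ) :
    Polynomial.aeval z (linePoly (MvPolynomial.X 2 * MvPolynomial.X 1 ^ 2 - MvPolynomial.X 0 ^ 3 :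
        MvPolynomial (Fin 3) ℝ) x e) =
      ((x 2 * x 1 ^ 2 - x 0 ^ 3 : ℝ) : ℂ)
        + ((2 * x 1 * x 2 * e 1 + x 1 ^ 2 * e 2 - 3 * x 0 ^ 2 * e 0 : ℝ) : ℂ) * z
        + ((x 2 * e 1 ^ 2 + 2 * x 1 * e 1 * e 2 - 3 * x 0 * e 0 ^ 2 : ℝ) : ℂ) * z ^ 2
        + ((e 2 * e 1 ^ 2 - e 0 ^ 3 : ℝ) : ℂ) * z ^ 3 := by
  rw [lp_eq]
  simp [Polynomial.aeval_C, Complex.coe_algebraMap]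

lemma eval_I_zero (a b c d : ℝ) (h1 : a - c = 0) (h2 : b - d = 0) :
    (a : ℂ) + (b : ℂ) * Complex.I + (c : ℂ) * Complex.I ^ 2 + (d : ℂ) * Complex.I ^ 3 = 0 := by
  have h1' : ((a : ℂ) - c) = 0 := by exact_mod_cast congrArg (fun t : ℝ => (t : ℂ)) h1
  have h2' : ((b : ℂ) - d) = 0 := by exact_mod_cast congrArg (fun t : ℝ => (t : ℂ)) h2
  linear_combination h1' + Complex.I * h2' + ((c : ℂ) + (d : ℂ) * Complex.I) * Complex.I_sq

lemma cubic_root (p q r : ℝ) : ∃ μ : ℝ, μ ^ 3 + p * μ ^ 2 + q * μ + r = 0 := by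
  have hc : Continuous fun μ : ℝ => μ ^ 3 + p * μ ^ 2 + q * μ + r := by fun_prop
  set M : ℝ := 1 + |p| + |q| + |r| with hM
  have hM1 : 1 ≤ M := by
    have := abs_nonneg p; have := abs_nonneg q; have := abs_nonneg r; linarith
  have hp' : p ≤ |p| := le_abs_self p
  have hp'' : -|p| ≤ p := neg_abs_le p
  have hq' : q ≤ |q| := le_abs_self q
  have hq'' : -|q| ≤ q := neg_abs_le q
  have hr' : r ≤ |r| := le_abs_self r
  have hr'' : -|r| ≤ r := neg_abs_le r
  have hMp : |p| ≤ M - 1 := by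
    have := abs_nonneg q; have := abs_nonneg r; simp only [hM]; linarith
  have hpos : (0 : ℝ) ≤ M ^ 3 + p * M ^ 2 + q * M + r := by nlinarith
  have hneg : (-M) ^ 3 + p * (-M) ^ 2 + q * (-M) + r ≤ 0 := by nlinarith
  exact intermediate_value_univ (-M) M hc ⟨hneg, hpos⟩

lemma not_splits (p : Polynomial ℝ) (hp : p ≠ 0) (z : ℂ) (hz : z.im ≠ 0)
    (h0 : Polynomial.aeval z p = 0) : ¬ p.Splits := by
  intro hs
  have hfact := Polynomial.Splits.eq_prod_roots hs
  have hev := congrArg (Polynomial.aeval z) hfact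
  rw [h0] at hev
  simp only [map_mul, Polynomial.aeval_C, map_multiset_prod, Multiset.map_map,
    Function.comp, map_sub, Polynomial.aeval_X, Polynomial.aeval_C] at hev
  have hlc : (algebraMap ℝ ℂ) p.leadingCoeff ≠ 0 := by
    simpa using Polynomial.leadingCoeff_ne_zero.mpr hp
  have hprod : (Multiset.map (fun a => z - (algebraMap ℝ ℂ) a) p.roots).prod = 0 := by
    rcases mul_eq_zero.mp hev.symm with h | h
    · exact absurd h hlc
    · exact h
  rw [Multiset.prod_eq_zero_iff] at hprod
  obtain ⟨w, hw, hw0⟩ := Multiset.mem_map.mp hprod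
  have hzw : z = (algebraMap ℝ ℂ) w := sub_eq_zero.mp hw0
  apply hz
  rw [hzw]
  simp

/-- The cuspidal cubic `F(X, Y, Z) = Z·Y² − X³`, with variables `X 0 = X`, `X 1 = Y`,
`X 2 = Z`: its hyperbolicity directions are exactly the multiples of `(0, 0, 1)`. -/
theorem stmt_4 :
    ∀ e : Fin 3 → ℝ,
      IsHypDir (MvPolynomial.X 2 * MvPolynomial.X 1 ^ 2 - MvPolynomial.X 0 ^ 3 :
          MvPolynomial (Fin 3) ℝ) e ↔
        ∃ c : ℝ, e = c • ![(0 : ℝ), 0, 1] := by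

  intro e
  constructor
  · intro hhyp
    have key : e 0 = 0 ∧ e 1 = 0 := by
      by_cases h1 : e 1 = 0
      · by_cases h0 : e 0 = 0
        · exact ⟨h0, h1⟩
        · -- Case A : e1 = 0, e0 ≠ 0
          exfalso
          set s : ℝ := min 1 (|e 0| ^ 3 / (|e 2| + 1)) with hs
          have hs0 : 0 < s := lt_min one_pos (by positivity)
          have hs1 : s ≤ 1 := min_le_left _ _
          have hs2 : s ≤ |e 0| ^ 3 / (|e 2| + 1) := min_le_right _ _
          have h5 : s ^ 5 ≤ 1 := pow_le_one₀ hs0.le hs1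
          have hs6 : s ^ 6 ≤ s := by nlinarith [mul_le_mul_of_nonneg_left h5 hs0.le]
          have h2p : (0:ℝ) ≤ |e 2| := abs_nonneg _
          have hdd : |e 0| ^ 3 / (|e 2| + 1) * (|e 2| + 1) = |e 0| ^ 3 :=
            div_mul_cancel₀ _ (by positivity)
          have he0p : 0 < |e 0| ^ 3 := by positivity
          have hlt : |e 2| * s ^ 6 < |e 0| ^ 3 := by
            have ha : |e 2| * s ^ 6 ≤ |e 2| * s := mul_le_mul_of_nonneg_left hs6 h2p
            have hb : |e 2| * s ≤ |e 2| * (|e 0| ^ 3 / (|e 2| + 1)) :=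
              mul_le_mul_of_nonneg_left hs2 h2p
            nlinarith [hdd, he0p]
          have habs2 : e 2 ≤ |e 2| := le_abs_self _
          have habs2' : -|e 2| ≤ e 2 := neg_abs_le _
          have hV : 0 ≤ (e 2 * s ^ 6 + e 0 ^ 3) / (3 * e 0 * s ^ 4) := by
            rcases lt_or_gt_of_ne h0 with hneg | hpos
            · have habs : |e 0| = -e 0 := abs_of_neg hneg
              have h6 : (0:ℝ) ≤ s ^ 6 := by positivity
              have hm : e 2 * s ^ 6 ≤ |e 2| * s ^ 6 := mul_le_mul_of_nonneg_right habs2 h6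
              have habs3 : |e 0| ^ 3 = -e 0 ^ 3 := by rw [habs]; ring
              have hnum : e 2 * s ^ 6 + e 0 ^ 3 ≤ 0 := by linarith
              have hs4 : (0:ℝ) < s ^ 4 := by positivity
              have hden : 3 * e 0 * s ^ 4 ≤ 0 := by nlinarith
              exact div_nonneg_of_nonpos hnum hden
            · have habs : |e 0| = e 0 := abs_of_pos hpos
              have h6 : (0:ℝ) ≤ s ^ 6 := by positivity
              have hm : -(|e 2| * s ^ 6) ≤ e 2 * s ^ 6 := by
                nlinarith [mul_le_mul_of_nonneg_right habs2' h6]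
              have habs3 : |e 0| ^ 3 = e 0 ^ 3 := by rw [habs]
              have hnum : 0 ≤ e 2 * s ^ 6 + e 0 ^ 3 := by linarith
              have hden : 0 < 3 * e 0 * s ^ 4 := by positivity
              exact div_nonneg hnum hden.le
          set μ := Real.sqrt ((e 2 * s ^ 6 + e 0 ^ 3) / (3 * e 0 * s ^ 4)) with hμ
          have hμ2 : μ ^ 2 = (e 2 * s ^ 6 + e 0 ^ 3) / (3 * e 0 * s ^ 4) := Real.sq_sqrt hV
          have heq : 3 * e 0 * s ^ 4 * μ ^ 2 = e 2 * s ^ 6 + e 0 ^ 3 := by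
            rw [hμ2]; field_simp
          set x : Fin 3 → ℝ := ![s ^ 2 * μ, s ^ 3, μ ^ 3 - 3 * μ * e 0 ^ 2 / s ^ 4] with hx
          have hx0 : x 0 = s ^ 2 * μ := rfl
          have hx1 : x 1 = s ^ 3 := rfl
          have hx2 : x 2 = μ ^ 3 - 3 * μ * e 0 ^ 2 / s ^ 4 := rfl
          refine not_splits _ ?_ Complex.I (by simp) ?_ (hhyp x)
          · intro hP0
            have hco := lp_coeff3 x e
            rw [hP0, coeff_zero] at hco
            rw [h1] at hco
            have : e 0 ^ 3 = 0 := by nlinarith [hco]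
            exact h0 (pow_eq_zero_iff (by norm_num : (3:ℕ) ≠ 0) |>.mp this)
          · rw [lp_aeval, hx0, hx1, hx2, h1]
            apply eval_I_zero
            · field_simp
              ring
            · linear_combination -heq
      · exfalso
        by_cases hd : e 2 * e 1 ^ 2 - e 0 ^ 3 = 0
        · by_cases h2 : e 2 = 0
          · -- Case C2 : e2 = 0, hence e0 = 0
            have he0 : e 0 = 0 := by
              rw [h2] at hd
              have : e 0 ^ 3 = 0 := by linarith
              exact pow_eq_zero_iff (by norm_num : (3:ℕ) ≠ 0) |>.mp this
            set x : Fin 3 → ℝ := ![-e 1, 0, e 1] with hx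
            have hx0 : x 0 = -e 1 := rfl
            have hx1 : x 1 = 0 := rfl
            have hx2 : x 2 = e 1 := rfl
            refine not_splits _ ?_ Complex.I (by simp) ?_ (hhyp x)
            · intro hP0
              have hco := lp_coeff2 x e
              rw [hP0, coeff_zero, hx0, hx1, hx2, h2, he0] at hco
              have : e 1 ^ 3 = 0 := by nlinarith [hco]
              exact h1 (pow_eq_zero_iff (by norm_num : (3:ℕ) ≠ 0) |>.mp this)
            · rw [lp_aeval, hx0, hx1, hx2, h2, he0]
              apply eval_I_zero
              · ring
              · ring
          · -- Case C1 : e1 ≠ 0, e2 ≠ 0, e2 e1² = e0³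
            set t : ℝ := Real.sqrt 3 with ht
            have ht2 : t ^ 2 = 3 := Real.sq_sqrt (by norm_num)
            have ht0 : 0 < t := Real.sqrt_pos.mpr (by norm_num)
            set z : ℂ := ((-1/2 : ℝ) : ℂ) + ((t/6 : ℝ) : ℂ) * Complex.I with hz
            have hzim : z.im ≠ 0 := by
              simp only [hz, Complex.add_im, Complex.ofReal_im, Complex.mul_im,
                Complex.ofReal_re, Complex.I_im, Complex.I_re, mul_one, mul_zero, add_zero,
                zero_add]
              positivity
            set x : Fin 3 → ℝ := ![0, e 1, e 2] with hx
            have hx0 : x 0 = 0 := rfl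
            have hx1 : x 1 = e 1 := rfl
            have hx2 : x 2 = e 2 := rfl
            refine not_splits _ ?_ z hzim ?_ (hhyp x)
            · intro hP0
              have hco := lp_coeff2 x e
              rw [hP0, coeff_zero, hx0, hx1, hx2] at hco
              have : 3 * (e 1 ^ 2 * e 2) = 0 := by linarith [hco]
              have h12 : e 1 ^ 2 * e 2 = 0 := by linarith
              rcases mul_eq_zero.mp h12 with h | h
              · exact h1 (pow_eq_zero_iff (by norm_num : (2:ℕ) ≠ 0) |>.mp h)
              · exact h2 h
            · rw [lp_aeval, hx0, hx1, hx2, hz]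
              have hdC : ((e 2 : ℂ)) * (e 1 : ℂ) ^ 2 - (e 0 : ℂ) ^ 3 = 0 := by
                exact_mod_cast congrArg (fun y : ℝ => (y : ℂ)) hd
              have htC : ((t : ℂ)) ^ 2 = 3 := by exact_mod_cast congrArg (fun y : ℝ => (y : ℂ)) ht2
              push_cast
              linear_combination (((-1/2 : ℂ)) + ((t:ℂ)/6) * Complex.I) ^ 3 * hdC
                + ((e 2 : ℂ) * (e 1 : ℂ) ^ 2 * (t:ℂ) ^ 2 / 12) * Complex.I_sq
                - ((e 2 : ℂ) * (e 1 : ℂ) ^ 2 / 12) * htC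
        · -- Case B : e1 ≠ 0, e2 e1² ≠ e0³
          obtain ⟨μ, hμ⟩ := cubic_root (-3 * e 0 * (1 - e 1 ^ 2) / (2 * e 1)) (-3 * e 0 ^ 2)
            ((e 0 ^ 3 * (1 - e 1 ^ 2) + e 2 * (1 + e 1 ^ 2) ^ 2) / (2 * e 1))
          have hc : (3 * μ ^ 2 * e 0 - e 0 ^ 3) * (1 - e 1 ^ 2)
              - 2 * e 1 * (μ ^ 3 - 3 * μ * e 0 ^ 2) - e 2 * (1 + e 1 ^ 2) ^ 2 = 0 := by
            field_simp at hμ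
            linarith [hμ]
          set x : Fin 3 → ℝ :=
            ![μ, 1, (3 * μ ^ 2 * e 0 - e 0 ^ 3 - e 2 * (1 - e 1 ^ 2)) / (2 * e 1)] with hx
          have hx0 : x 0 = μ := rfl
          have hx1 : x 1 = 1 := rfl
          have hx2 : x 2 = (3 * μ ^ 2 * e 0 - e 0 ^ 3 - e 2 * (1 - e 1 ^ 2)) / (2 * e 1) := rfl
          refine not_splits _ ?_ Complex.I (by simp) ?_ (hhyp x)
          · intro hP0
            have hco := lp_coeff3 x e
            rw [hP0, coeff_zero] at hco
            exact hd hco.symm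
          · rw [lp_aeval, hx0, hx1, hx2]
            apply eval_I_zero
            · field_simp
              linear_combination hc
            · field_simp
              ring
    refine ⟨e 2, funext fun i => ?_⟩
    fin_cases i <;> simp [key.1, key.2]
  · rintro ⟨c, rfl⟩
    intro x
    have h0 : (c • ![(0 : ℝ), 0, 1]) 0 = 0 := by simp
    have h1 : (c • ![(0 : ℝ), 0, 1]) 1 = 0 := by simp
    apply Splits.of_natDegree_le_one
    rw [lp_eq, h0, h1]
    simp only [mul_zero, zero_mul, ne_eq, OfNat.ofNat_ne_zero, not_false_eq_true, zero_pow,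
      sub_zero, add_zero, map_zero]
    compute_degree
end

section
/- For every natural number n, the set of coefficient vectors (a₀, a₁, …, a_n) ∈ ℝ^{n+1} such that the real polynomial a₀ + a₁X + ⋯ + a_nX^n splits over ℝ (all of its complex roots are real; the zero polynomial is included) is a closed subset of ℝ^{n+1}. In other words, a coefficientwise limit of real polynomials of degree at most n that split over ℝ again splits over ℝ. -/
open Polynomial Complex

-- monotonicity of |p| along vertical lines, for split polynomials
lemma mono_of_splits (p : Polynomial ℝ) (hs : p.Splits)
    (x y y' : ℝ) (h0 : 0 ≤ y') (h1 : y' ≤ y) :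
    ‖(p.map (algebraMap ℝ ℂ)).eval (x + y' * Complex.I)‖ ≤
      ‖(p.map (algebraMap ℝ ℂ)).eval (x + y * Complex.I)‖ := by
  have hfac := hs.eq_prod_roots
  have key : ∀ t : ℝ, Complex.normSq ((p.map (algebraMap ℝ ℂ)).eval (x + t * Complex.I)) =
      Complex.normSq (p.leadingCoeff) *
        (p.roots.map (fun r : ℝ => (x - r) ^ 2 + t ^ 2)).prod := by
    intro t
    conv_lhs => rw [hfac]
    rw [Polynomial.map_mul, Polynomial.map_multiset_prod, Multiset.map_map,
      Polynomial.eval_mul, Polynomial.eval_multiset_prod, Multiset.map_map,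
      map_mul, map_multiset_prod, Multiset.map_map]
    congr 1
    · simp
    · refine congrArg Multiset.prod (Multiset.map_congr rfl ?_)
      intro r _
      simp only [Function.comp_apply, Polynomial.map_sub, Polynomial.map_X, Polynomial.map_C,
        Polynomial.eval_sub, Polynomial.eval_X, Polynomial.eval_C]
      simp [Complex.normSq_apply]
      ring
  rw [Complex.norm_def, Complex.norm_def, key, key]
  apply Real.sqrt_le_sqrt
  apply mul_le_mul_of_nonneg_left _ (Complex.normSq_nonneg _)
  apply Multiset.prod_map_le_prod_map₀
  · intro r _; positivity
  · intro r _
    have : y' ^ 2 ≤ y ^ 2 := by nlinarith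
    nlinarith

lemma splits_of_mono (p : Polynomial ℝ)
    (h : ∀ x y y' : ℝ, 0 ≤ y' → y' ≤ y →
      ‖(p.map (algebraMap ℝ ℂ)).eval (x + y' * Complex.I)‖ ≤
        ‖(p.map (algebraMap ℝ ℂ)).eval (x + y * Complex.I)‖) :
    p.Splits := by
  by_cases hp : p = 0
  · simp [hp]
  rw [Polynomial.splits_iff_splits]
  right
  intro g hg hdvd
  by_contra hdeg
  -- g is irreducible over ℝ of degree ≠ 1, get a complex root z of g
  have hg0 : 0 < (g.map (algebraMap ℝ ℂ)).degree := by
    rw [Polynomial.degree_map]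
    exact Polynomial.degree_pos_of_irreducible hg
  obtain ⟨z, hz⟩ := Complex.exists_root hg0
  rw [Polynomial.IsRoot] at hz
  -- z is not real
  have hzim : z.im ≠ 0 := by
    intro him
    have hzre : (z.re : ℂ) = z := by
      exact Complex.ext rfl him.symm
    have : g.IsRoot z.re := by
      have : ((g.eval z.re : ℝ) : ℂ) = 0 := by
        rw [← hz, ← hzre, Polynomial.eval_map]
        exact (Polynomial.eval₂_at_apply (algebraMap ℝ ℂ) z.re).symm
      exact_mod_cast this
    -- an irreducible real polynomial with a real root has degree 1
    have hdvd' : Polynomial.X - Polynomial.C z.re ∣ g := Polynomial.dvd_iff_isRoot.mpr this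
    obtain ⟨e, he⟩ := hdvd'
    rcases hg.isUnit_or_isUnit he with hu | hu
    · exact (Polynomial.not_isUnit_X_sub_C z.re) hu
    · apply hdeg
      rw [he, Polynomial.degree_mul, Polynomial.degree_X_sub_C,
        Polynomial.degree_eq_zero_of_isUnit hu, add_zero]
  -- z is a root of p over ℂ
  have hzp : (p.map (algebraMap ℝ ℂ)).eval z = 0 := by
    obtain ⟨q, hq⟩ := hdvd
    rw [hq, Polynomial.map_mul, Polynomial.eval_mul, hz, zero_mul]
  -- also conj z is a root
  have hzpc : (p.map (algebraMap ℝ ℂ)).eval ((starRingEnd ℂ) z) = 0 := by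
    have := Polynomial.aeval_conj p z
    rw [Polynomial.aeval_def, Polynomial.aeval_def, ← Polynomial.eval_map,
      ← Polynomial.eval_map] at this
    rw [this, hzp, map_zero]
  -- get a root w = x₀ + y₀ I with y₀ > 0
  obtain ⟨y₀, hy₀, hw⟩ : ∃ y₀ : ℝ, 0 < y₀ ∧
      (p.map (algebraMap ℝ ℂ)).eval ((z.re : ℂ) + y₀ * Complex.I) = 0 := by
    rcases lt_or_gt_of_ne hzim with him | him
    · refine ⟨-z.im, by linarith, ?_⟩
      have : (z.re : ℂ) + (-z.im : ℝ) * Complex.I = (starRingEnd ℂ) z := by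
        simp [Complex.ext_iff]
      rw [this]; exact hzpc
    · refine ⟨z.im, him, ?_⟩
      rw [Complex.re_add_im]; exact hzp
  -- then every point x₀ + t I, t ∈ [0, y₀] is a root: infinitely many roots
  have hroots : (fun t : ℝ => (z.re : ℂ) + t * Complex.I) '' Set.Icc 0 y₀ ⊆
      {w : ℂ | (p.map (algebraMap ℝ ℂ)).IsRoot w} := by
    rintro - ⟨t, ⟨ht0, ht1⟩, rfl⟩
    have := h z.re y₀ t ht0 ht1
    rw [hw] at this
    simp only [norm_zero] at this
    have : ‖(p.map (algebraMap ℝ ℂ)).eval ((z.re : ℂ) + t * Complex.I)‖ = 0 :=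
      le_antisymm this (norm_nonneg _)
    simpa [Polynomial.IsRoot] using (norm_eq_zero.mp this)
  have hinf : ((fun t : ℝ => (z.re : ℂ) + t * Complex.I) '' Set.Icc 0 y₀).Infinite := by
    apply Set.Infinite.image
    · intro s _ t _ hst
      have := congrArg Complex.im hst
      simpa using this
    · exact Set.Icc_infinite hy₀
  have hfin : {w : ℂ | (p.map (algebraMap ℝ ℂ)).IsRoot w}.Finite :=
    Polynomial.finite_setOf_isRoot (by
      simpa using (Polynomial.map_ne_zero hp :
        p.map (algebraMap ℝ ℂ) ≠ 0))
  exact (hinf.mono hroots) hfin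

theorem stmt_7 (n : ℕ) :
    IsClosed {a : Fin (n + 1) → ℝ |
      (∑ i : Fin (n + 1), Polynomial.C (a i) * Polynomial.X ^ (i : ℕ)).Splits} := by
  have evalf : ∀ (a : Fin (n + 1) → ℝ) (z : ℂ),
      (((∑ i : Fin (n + 1), Polynomial.C (a i) * Polynomial.X ^ (i : ℕ)).map
        (algebraMap ℝ ℂ)).eval z) = ∑ i : Fin (n + 1), (a i : ℂ) * z ^ (i : ℕ) := by
    intro a z
    simp [Polynomial.map_sum, Polynomial.eval_finset_sum]
  have key : {a : Fin (n + 1) → ℝ |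
      (∑ i : Fin (n + 1), Polynomial.C (a i) * Polynomial.X ^ (i : ℕ)).Splits} =
      ⋂ (x : ℝ), ⋂ (y : ℝ), ⋂ (y' : ℝ),
        {a : Fin (n + 1) → ℝ | 0 ≤ y' → y' ≤ y →
          ‖∑ i : Fin (n + 1), (a i : ℂ) * ((x : ℂ) + y' * Complex.I) ^ (i : ℕ)‖ ≤
            ‖∑ i : Fin (n + 1), (a i : ℂ) * ((x : ℂ) + y * Complex.I) ^ (i : ℕ)‖} := by
    ext a
    simp only [Set.mem_setOf_eq, Set.mem_iInter]
    constructor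
    · intro hs x y y' h0 h1
      have := mono_of_splits _ hs x y y' h0 h1
      rwa [evalf, evalf] at this
    · intro hmono
      apply splits_of_mono
      intro x y y' h0 h1
      rw [evalf, evalf]
      exact hmono x y y' h0 h1
  rw [key]
  refine isClosed_iInter fun x => isClosed_iInter fun y => isClosed_iInter fun y' => ?_
  by_cases hc : 0 ≤ y' ∧ y' ≤ y
  · have heq : {a : Fin (n + 1) → ℝ | 0 ≤ y' → y' ≤ y →
        ‖∑ i : Fin (n + 1), (a i : ℂ) * ((x : ℂ) + y' * Complex.I) ^ (i : ℕ)‖ ≤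
          ‖∑ i : Fin (n + 1), (a i : ℂ) * ((x : ℂ) + y * Complex.I) ^ (i : ℕ)‖} =
        {a : Fin (n + 1) → ℝ |
        ‖∑ i : Fin (n + 1), (a i : ℂ) * ((x : ℂ) + y' * Complex.I) ^ (i : ℕ)‖ ≤
          ‖∑ i : Fin (n + 1), (a i : ℂ) * ((x : ℂ) + y * Complex.I) ^ (i : ℕ)‖} := by
      ext a
      simp [hc.1, hc.2]
    rw [heq]
    have hcont : ∀ z : ℂ, Continuous fun a : Fin (n + 1) → ℝ =>
        ‖∑ i : Fin (n + 1), (a i : ℂ) * z ^ (i : ℕ)‖ := fun z =>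
      continuous_norm.comp (continuous_finset_sum _ fun i _ =>
        (Complex.continuous_ofReal.comp (continuous_apply i)).mul continuous_const)
    exact isClosed_le (hcont _) (hcont _)
  · have heq : {a : Fin (n + 1) → ℝ | 0 ≤ y' → y' ≤ y →
        ‖∑ i : Fin (n + 1), (a i : ℂ) * ((x : ℂ) + y' * Complex.I) ^ (i : ℕ)‖ ≤
          ‖∑ i : Fin (n + 1), (a i : ℂ) * ((x : ℂ) + y * Complex.I) ^ (i : ℕ)‖} =
        Set.univ := by
      ext a
      simp only [Set.mem_setOf_eq, Set.mem_univ, iff_true]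
      intro h0 h1
      exact absurd ⟨h0, h1⟩ hc
    rw [heq]
    exact isClosed_univ
end

section
/- Let A ∈ GL₄(ℝ), let I ⊆ ℝ be an open interval, and let r = (r₁, r₂, r₃) : I → ℝ³ be three times differentiable. Define R(t) = A·(1, r₁(t), r₂(t), r₃(t)) ∈ ℝ⁴ with coordinates (R₀, R₁, R₂, R₃), assume R₀(t) ≠ 0 for all t ∈ I, and set r̃ = (R₁/R₀, R₂/R₀, R₃/R₀) : I → ℝ³. Then for every t ∈ I, det(r̃'(t), r̃''(t), r̃'''(t)) = det(A) · det(r'(t), r''(t), r'''(t)) / R₀(t)⁴. In particular, if det(A) > 0 then det(r̃', r̃'', r̃''') has everywhere the same sign as det(r', r'', r'''); this is the paper's claim that the sign of the torsion of a curve in ℝP³ does not depend on the choice of positively oriented affine chart. -/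
/-- Determinant of the 3×3 matrix with columns `u`, `v`, `w`. -/
noncomputable def det3 (u v w : Fin 3 → ℝ) : ℝ :=
  Matrix.det (Matrix.of ![u, v, w]).transpose

private lemma deriv3_eq {F : Type*} [NormedAddCommGroup F] [NormedSpace ℝ F]
    (f d1 d2 d3 : ℝ → F) (U : Set ℝ) (hU : IsOpen U)
    (h1 : ∀ s ∈ U, HasDerivAt f (d1 s) s)
    (h2 : ∀ s ∈ U, HasDerivAt d1 (d2 s) s)
    (h3 : ∀ s ∈ U, HasDerivAt d2 (d3 s) s) :
    ∀ s ∈ U, deriv f s = d1 s ∧ deriv (deriv f) s = d2 s ∧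
      deriv (deriv (deriv f)) s = d3 s := by
  have e1 : Set.EqOn (deriv f) d1 U := fun s hs => (h1 s hs).deriv
  have e2 : Set.EqOn (deriv (deriv f)) d2 U := by
    intro s hs
    have e : deriv f =ᶠ[nhds s] d1 := Filter.eventuallyEq_of_mem (hU.mem_nhds hs) e1
    rw [e.deriv_eq, (h2 s hs).deriv]
  have e3 : Set.EqOn (deriv (deriv (deriv f))) d3 U := by
    intro s hs
    have e : deriv (deriv f) =ᶠ[nhds s] d2 := Filter.eventuallyEq_of_mem (hU.mem_nhds hs) e2
    rw [e.deriv_eq, (h3 s hs).deriv]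
  exact fun s hs => ⟨e1 hs, e2 hs, e3 hs⟩

private lemma quot_derivs (f g f1 f2 f3 g1 g2 g3 : ℝ → ℝ) (U : Set ℝ)
    (hfa : ∀ s ∈ U, HasDerivAt f (f1 s) s)
    (hfb : ∀ s ∈ U, HasDerivAt f1 (f2 s) s)
    (hfc : ∀ s ∈ U, HasDerivAt f2 (f3 s) s)
    (hga : ∀ s ∈ U, HasDerivAt g (g1 s) s)
    (hgb : ∀ s ∈ U, HasDerivAt g1 (g2 s) s)
    (hgc : ∀ s ∈ U, HasDerivAt g2 (g3 s) s)
    (hf0 : ∀ s ∈ U, f s ≠ 0) :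
    (∀ s ∈ U, HasDerivAt (fun u => g u / f u)
        ((g1 s * f s - g s * f1 s) / f s ^ 2) s) ∧
    (∀ s ∈ U, HasDerivAt (fun u => (g1 u * f u - g u * f1 u) / f u ^ 2)
        ((g2 s * f s ^ 2 - 2 * f s * f1 s * g1 s - f s * f2 s * g s
            + 2 * f1 s ^ 2 * g s) / f s ^ 3) s) ∧
    (∀ s ∈ U, HasDerivAt (fun u => (g2 u * f u ^ 2 - 2 * f u * f1 u * g1 u
          - f u * f2 u * g u + 2 * f1 u ^ 2 * g u) / f u ^ 3)
        ((g3 s * f s ^ 3 - 3 * f s ^ 2 * f1 s * g2 s - 3 * f s ^ 2 * f2 s * g1 s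
            - f s ^ 2 * f3 s * g s + 6 * f s * f1 s ^ 2 * g1 s
            + 6 * f s * f1 s * f2 s * g s - 6 * f1 s ^ 3 * g s) / f s ^ 4) s) := by
  refine ⟨fun s hs => ?_, fun s hs => ?_, fun s hs => ?_⟩
  · exact (hga s hs).fun_div (hfa s hs) (hf0 s hs)
  · have h := (((hgb s hs).fun_mul (hfa s hs)).fun_sub ((hga s hs).fun_mul (hfb s hs))).fun_div
      ((hfa s hs).fun_pow 2) (pow_ne_zero 2 (hf0 s hs))
    refine h.congr_deriv ?_
    have h0 := hf0 s hs
    field_simp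
    ring
  · have h := (((((hgc s hs).fun_mul ((hfa s hs).fun_pow 2)).fun_sub
        ((((hfa s hs).const_mul 2).fun_mul (hfb s hs)).fun_mul (hgb s hs))).fun_sub
        (((hfa s hs).fun_mul (hfc s hs)).fun_mul (hga s hs))).fun_add
        ((((hfb s hs).fun_pow 2).const_mul 2).fun_mul (hga s hs))).fun_div
        ((hfa s hs).fun_pow 3) (pow_ne_zero 3 (hf0 s hs))
    refine h.congr_deriv ?_
    have h0 := hf0 s hs
    field_simp
    ring

private lemma det_fin_four (M : Matrix (Fin 4) (Fin 4) ℝ) :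
    M.det = M 0 0 * M 1 1 * M 2 2 * M 3 3 - M 0 0 * M 1 1 * M 2 3 * M 3 2 - M 0 0 * M 1 2 * M 2 1 * M 3 3 + M 0 0 * M 1 2 * M 2 3 * M 3 1 + M 0 0 * M 1 3 * M 2 1 * M 3 2 - M 0 0 * M 1 3 * M 2 2 * M 3 1 - M 0 1 * M 1 0 * M 2 2 * M 3 3 + M 0 1 * M 1 0 * M 2 3 * M 3 2 + M 0 1 * M 1 2 * M 2 0 * M 3 3 - M 0 1 * M 1 2 * M 2 3 * M 3 0 - M 0 1 * M 1 3 * M 2 0 * M 3 2 + M 0 1 * M 1 3 * M 2 2 * M 3 0 + M 0 2 * M 1 0 * M 2 1 * M 3 3 - M 0 2 * M 1 0 * M 2 3 * M 3 1 - M 0 2 * M 1 1 * M 2 0 * M 3 3 + M 0 2 * M 1 1 * M 2 3 * M 3 0 + M 0 2 * M 1 3 * M 2 0 * M 3 1 - M 0 2 * M 1 3 * M 2 1 * M 3 0 - M 0 3 * M 1 0 * M 2 1 * M 3 2 + M 0 3 * M 1 0 * M 2 2 * M 3 1 + M 0 3 * M 1 1 * M 2 0 * M 3 2 - M 0 3 *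 M 1 1 * M 2 2 * M 3 0 - M 0 3 * M 1 2 * M 2 0 * M 3 1 + M 0 3 * M 1 2 * M 2 1 * M 3 0 := by
  rw [Matrix.det_succ_row_zero]
  simp (config := { decide := true }) [Fin.sum_univ_succ, Matrix.det_fin_three,
    Matrix.submatrix_apply, Fin.succAbove,
    show Fin.succ (2 : Fin 3) = 3 from rfl, show Fin.castSucc (2 : Fin 3) = 2 from rfl]
  ring

private lemma det_identity (X : Matrix (Fin 4) (Fin 4) ℝ) (h0 : X 0 0 ≠ 0) :
    det3
      (fun i => (X i.succ 1 * X 0 0 - X i.succ 0 * X 0 1) / X 0 0 ^ 2)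
      (fun i => (X i.succ 2 * X 0 0 ^ 2 - 2 * X 0 0 * X 0 1 * X i.succ 1
          - X 0 0 * X 0 2 * X i.succ 0 + 2 * X 0 1 ^ 2 * X i.succ 0) / X 0 0 ^ 3)
      (fun i => (X i.succ 3 * X 0 0 ^ 3 - 3 * X 0 0 ^ 2 * X 0 1 * X i.succ 2
          - 3 * X 0 0 ^ 2 * X 0 2 * X i.succ 1 - X 0 0 ^ 2 * X 0 3 * X i.succ 0
          + 6 * X 0 0 * X 0 1 ^ 2 * X i.succ 1 + 6 * X 0 0 * X 0 1 * X 0 2 * X i.succ 0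
          - 6 * X 0 1 ^ 3 * X i.succ 0) / X 0 0 ^ 4)
      = X.det / X 0 0 ^ 4 := by
  simp only [det3, Matrix.det_fin_three, det_fin_four, Matrix.transpose_apply,
    Matrix.of_apply, Matrix.cons_val', Matrix.cons_val_zero, Matrix.cons_val_one,
    Matrix.head_cons, Matrix.empty_val', Matrix.cons_val, Matrix.cons_val_fin_one, Matrix.head_fin_const,
    show (0 : Fin 3).succ = 1 from rfl, show (1 : Fin 3).succ = 2 from rfl,
    show (2 : Fin 3).succ = 3 from rfl]
  field_simp
  ring

theorem stmt_9 (A : Matrix (Fin 4) (Fin 4) ℝ) (hA : IsUnit A.det)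
    (a b : ℝ) (I : Set ℝ) (hI : I = Set.Ioo a b)
    (r : ℝ → Fin 3 → ℝ)
    (hr1 : ∀ t ∈ I, DifferentiableAt ℝ r t)
    (hr2 : ∀ t ∈ I, DifferentiableAt ℝ (deriv r) t)
    (hr3 : ∀ t ∈ I, DifferentiableAt ℝ (deriv (deriv r)) t)
    (R : ℝ → Fin 4 → ℝ)
    (hR : ∀ t, R t = A.mulVec (Matrix.vecCons 1 (r t)))
    (hR0 : ∀ t ∈ I, R t 0 ≠ 0)
    (rt : ℝ → Fin 3 → ℝ)
    (hrt : ∀ t, rt t = fun i : Fin 3 => R t i.succ / R t 0) :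
    ∀ t ∈ I,
      det3 (deriv rt t) (deriv (deriv rt) t) (deriv (deriv (deriv rt)) t)
        = A.det * det3 (deriv r t) (deriv (deriv r) t) (deriv (deriv (deriv r)) t)
            / (R t 0) ^ 4 := by
  subst hI
  intro t ht
  have hUo : IsOpen (Set.Ioo a b) := isOpen_Ioo
  -- derivatives of the components of r
  have hrc1 : ∀ s ∈ Set.Ioo a b, ∀ j : Fin 3,
      HasDerivAt (fun u => r u j) (deriv r s j) s :=
    fun s hs j => hasDerivAt_pi.mp (hr1 s hs).hasDerivAt j
  have hrc2 : ∀ s ∈ Set.Ioo a b, ∀ j : Fin 3,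
      HasDerivAt (fun u => deriv r u j) (deriv (deriv r) s j) s :=
    fun s hs j => hasDerivAt_pi.mp (hr2 s hs).hasDerivAt j
  have hrc3 : ∀ s ∈ Set.Ioo a b, ∀ j : Fin 3,
      HasDerivAt (fun u => deriv (deriv r) u j) (deriv (deriv (deriv r)) s j) s :=
    fun s hs j => hasDerivAt_pi.mp (hr3 s hs).hasDerivAt j
  -- derivative functions of the components of R
  set P1 : Fin 4 → ℝ → ℝ := fun i u => ∑ j : Fin 3, A i j.succ * deriv r u j with hP1def
  set P2 : Fin 4 → ℝ → ℝ := fun i u => ∑ j : Fin 3, A i j.succ * deriv (deriv r) u j with hP2def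
  set P3 : Fin 4 → ℝ → ℝ := fun i u => ∑ j : Fin 3, A i j.succ * deriv (deriv (deriv r)) u j
    with hP3def
  have hPa : ∀ (i : Fin 4), ∀ s ∈ Set.Ioo a b, HasDerivAt (fun u => R u i) (P1 i s) s := by
    intro i s hs
    have hfun : (fun u => R u i) = fun u => A i 0 + ∑ j : Fin 3, A i j.succ * r u j := by
      funext u
      rw [hR u]
      simp [Matrix.mulVec, dotProduct, Fin.sum_univ_succ, Matrix.vecHead, Matrix.vecTail]
    rw [hfun]
    exact HasDerivAt.const_add _ (HasDerivAt.fun_sum fun j _ => (hrc1 s hs j).const_mul _)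
  have hPb : ∀ (i : Fin 4), ∀ s ∈ Set.Ioo a b, HasDerivAt (P1 i) (P2 i s) s :=
    fun i s hs => HasDerivAt.fun_sum fun j _ => (hrc2 s hs j).const_mul _
  have hPc : ∀ (i : Fin 4), ∀ s ∈ Set.Ioo a b, HasDerivAt (P2 i) (P3 i s) s :=
    fun i s hs => HasDerivAt.fun_sum fun j _ => (hrc3 s hs j).const_mul _
  have hf0 : ∀ s ∈ Set.Ioo a b, (fun u => R u 0) s ≠ 0 := hR0
  have hQ := fun i : Fin 3 => quot_derivs (fun u => R u 0) (fun u => R u i.succ)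
      (P1 0) (P2 0) (P3 0) (P1 i.succ) (P2 i.succ) (P3 i.succ) (Set.Ioo a b)
      (hPa 0) (hPb 0) (hPc 0) (hPa i.succ) (hPb i.succ) (hPc i.succ) hf0
  -- the three derivatives of rt
  have hv := deriv3_eq rt
      (fun s i => (P1 i.succ s * R s 0 - R s i.succ * P1 0 s) / R s 0 ^ 2)
      (fun s i => (P2 i.succ s * R s 0 ^ 2 - 2 * R s 0 * P1 0 s * P1 i.succ s
          - R s 0 * P2 0 s * R s i.succ + 2 * P1 0 s ^ 2 * R s i.succ) / R s 0 ^ 3)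
      (fun s i => (P3 i.succ s * R s 0 ^ 3 - 3 * R s 0 ^ 2 * P1 0 s * P2 i.succ s
          - 3 * R s 0 ^ 2 * P2 0 s * P1 i.succ s - R s 0 ^ 2 * P3 0 s * R s i.succ
          + 6 * R s 0 * P1 0 s ^ 2 * P1 i.succ s + 6 * R s 0 * P1 0 s * P2 0 s * R s i.succ
          - 6 * P1 0 s ^ 3 * R s i.succ) / R s 0 ^ 4)
      (Set.Ioo a b) hUo
      (fun s hs => hasDerivAt_pi.mpr fun i => by
        rw [show (fun u => rt u i) = fun u => R u i.succ / R u 0 from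
          funext fun u => by rw [hrt u]]
        exact (hQ i).1 s hs)
      (fun s hs => hasDerivAt_pi.mpr fun i => (hQ i).2.1 s hs)
      (fun s hs => hasDerivAt_pi.mpr fun i => (hQ i).2.2 s hs)
  obtain ⟨hd1, hd2, hd3⟩ := hv t ht
  rw [hd1, hd2, hd3]
  -- the comparison matrix
  set C : Matrix (Fin 4) (Fin 4) ℝ :=
    !![1, 0, 0, 0;
       r t 0, deriv r t 0, deriv (deriv r) t 0, deriv (deriv (deriv r)) t 0;
       r t 1, deriv r t 1, deriv (deriv r) t 1, deriv (deriv (deriv r)) t 1;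
       r t 2, deriv r t 2, deriv (deriv r) t 2, deriv (deriv (deriv r)) t 2] with hCdef
  have hX0 : ∀ i : Fin 4, R t i = (A * C) i 0 := by
    intro i
    rw [hR t]
    simp [Matrix.mul_apply, Matrix.mulVec, dotProduct, Fin.sum_univ_succ, hCdef]
  have hX1 : ∀ i : Fin 4, P1 i t = (A * C) i 1 := by
    intro i
    simp [hP1def, Matrix.mul_apply, Fin.sum_univ_succ, hCdef]
  have hX2 : ∀ i : Fin 4, P2 i t = (A * C) i 2 := by
    intro i
    simp [hP2def, Matrix.mul_apply, Fin.sum_univ_succ, hCdef]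
  have hX3 : ∀ i : Fin 4, P3 i t = (A * C) i 3 := by
    intro i
    simp [hP3def, Matrix.mul_apply, Fin.sum_univ_succ, hCdef]
  have hXdet : (A * C).det
      = A.det * det3 (deriv r t) (deriv (deriv r) t) (deriv (deriv (deriv r)) t) := by
    rw [Matrix.det_mul]
    congr 1
    simp [det3, hCdef, det_fin_four, Matrix.det_fin_three, Matrix.transpose_apply,
      Matrix.cons_val_zero, Matrix.cons_val_one, Matrix.cons_val_two, Matrix.cons_val_three,
      Matrix.head_cons, Matrix.tail_cons, Matrix.vecHead, Matrix.vecTail]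
    ring
  rw [← hXdet]
  simp only [hX0, hX1, hX2, hX3]
  exact det_identity (A * C) (by rw [← hX0 0]; exact hR0 t ht)
end
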